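/- arXiv:1405.5278 — 10 statements merged into one kernel-verified Lean document; each statement's English description precedes it below -/
import Mathlib

section
/- Let p be an odd prime and m, k positive integers, and let v2 denote the 2-adic valuation. Then gcd(p^k+1, p^m−1) = p^{gcd(k,m)}+1 if v2(m) > v2(k), and gcd(p^k+1, p^m−1) = 2 otherwise. -/
private lemma pow_sub_one_dvd_pow_sub_one (p a b : ℕ) (h : a ∣ b) :
    p ^ a - 1 ∣ p ^ b - 1 := by
  obtain ⟨w, rfl⟩ := h
  simpa [pow_mul] using Nat.sub_dvd_pow_sub_pow (p ^ a) 1 w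

private lemma cast_pow_eq_one {g p n : ℕ} (hg : 0 < g) (hp : 0 < p)
    (h : g ∣ p ^ n - 1) : (p : ZMod g) ^ n = 1 := by
  haveI : NeZero g := ⟨hg.ne'⟩
  have h1 : 1 ≤ p ^ n := Nat.one_le_pow _ _ hp
  have h0 : ((p ^ n - 1 : ℕ) : ZMod g) = 0 :=
    (ZMod.natCast_eq_zero_iff _ _).mpr h
  have h3 : p ^ n - 1 + 1 = p ^ n := Nat.sub_add_cancel h1
  have h4 : ((p ^ n : ℕ) : ZMod g) = 1 := by
    rw [← h3, Nat.cast_add, h0, Nat.cast_one, zero_add]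
  simpa using h4

private lemma gcd_pow_dvd {g p a b : ℕ} (hg : 0 < g) (hp : 0 < p)
    (ha : g ∣ p ^ a - 1) (hb : g ∣ p ^ b - 1) : g ∣ p ^ Nat.gcd a b - 1 := by
  haveI : NeZero g := ⟨hg.ne'⟩
  have h1 := cast_pow_eq_one hg hp ha
  have h2 := cast_pow_eq_one hg hp hb
  have ho : orderOf (p : ZMod g) ∣ Nat.gcd a b :=
    Nat.dvd_gcd (orderOf_dvd_of_pow_eq_one h1) (orderOf_dvd_of_pow_eq_one h2)
  have h3 : (p : ZMod g) ^ Nat.gcd a b = 1 := orderOf_dvd_iff_pow_eq_one.mp ho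
  have h4 : ((p ^ Nat.gcd a b - 1 : ℕ) : ZMod g) = 0 := by
    rw [Nat.cast_sub (Nat.one_le_pow _ _ hp)]
    push_cast
    rw [h3]
    ring
  exact (ZMod.natCast_eq_zero_iff _ _).mp h4

private lemma dvd_of_dvd_two_mul {e k : ℕ} (he : 0 < e) (h : e ∣ 2 * k)
    (hv : padicValNat 2 e ≤ padicValNat 2 k) : e ∣ k := by
  have h2 : Nat.Prime 2 := Nat.prime_two
  have hproj : 2 ^ padicValNat 2 e ∣ k :=
    dvd_trans (pow_dvd_pow 2 hv) pow_padicValNat_dvd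
  have hcompl : ordCompl[2] e ∣ k := by
    have h1 : ordCompl[2] e ∣ 2 * k := dvd_trans (Nat.ordCompl_dvd e 2) h
    have hcop : Nat.Coprime 2 (ordCompl[2] e) := Nat.coprime_ordCompl h2 he.ne'
    exact hcop.symm.dvd_of_dvd_mul_left h1
  have hcop2 : Nat.Coprime (2 ^ padicValNat 2 e) (ordCompl[2] e) :=
    Nat.Coprime.pow_left _ (Nat.coprime_ordCompl h2 he.ne')
  have hmd := hcop2.mul_dvd_of_dvd_of_dvd hproj hcompl
  have hfac : padicValNat 2 e = e.factorization 2 :=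
    (Nat.factorization_def e h2).symm
  rwa [hfac, Nat.ordProj_mul_ordCompl_eq_self] at hmd

private lemma two_mul_dvd_of_lt {d m : ℕ} (hd : 0 < d) (hdm : d ∣ m)
    (hv : padicValNat 2 d < padicValNat 2 m) : 2 * d ∣ m := by
  have h2 : Nat.Prime 2 := Nat.prime_two
  have hproj : 2 ^ (padicValNat 2 d + 1) ∣ m :=
    dvd_trans (pow_dvd_pow 2 hv) pow_padicValNat_dvd
  have hcompl : ordCompl[2] d ∣ m := (Nat.ordCompl_dvd d 2).trans hdm
  have hcop : Nat.Coprime (2 ^ (padicValNat 2 d + 1)) (ordCompl[2] d) :=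
    Nat.Coprime.pow_left _ (Nat.coprime_ordCompl h2 hd.ne')
  have hmd := hcop.mul_dvd_of_dvd_of_dvd hproj hcompl
  have hfac : padicValNat 2 d = d.factorization 2 :=
    (Nat.factorization_def d h2).symm
  have : 2 ^ (padicValNat 2 d + 1) * ordCompl[2] d = 2 * d := by
    rw [pow_succ', mul_assoc, hfac, Nat.ordProj_mul_ordCompl_eq_self]
  rwa [this] at hmd

private lemma not_two_mul_dvd {x c : ℕ} (hx : Odd x) (hx1 : 1 ≤ x) (hc : Odd c) :
    ¬ (2 * (x + 1) ∣ x ^ c + 1) := by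
  intro h
  obtain ⟨e, he⟩ := hc
  have h1 : 2 * (x + 1) ∣ x ^ 2 - 1 := by
    have hs : x ^ 2 - 1 = (x + 1) * (x - 1) := by
      simpa using Nat.sq_sub_sq x 1
    obtain ⟨y, hy⟩ := hx
    have hxm1 : x - 1 = 2 * y := by omega
    exact ⟨y, by rw [hs, hxm1]; ring⟩
  have h2 : x ^ 2 - 1 ∣ x ^ (2 * e) - 1 :=
    pow_sub_one_dvd_pow_sub_one x 2 (2 * e) ⟨e, rfl⟩
  have h3 : 2 * (x + 1) ∣ x * (x ^ (2 * e) - 1) := (h1.trans h2).mul_left x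
  have hpow1 : 1 ≤ x ^ (2 * e) := Nat.one_le_pow _ _ hx1
  have h4 : x * (x ^ (2 * e) - 1) = x ^ c - x := by
    rw [Nat.mul_sub, mul_one, ← pow_succ', he]
  rw [h4] at h3
  have hxc : x ≤ x ^ c := Nat.le_self_pow (by omega) x
  have h5 : 2 * (x + 1) ∣ (x ^ c + 1) - (x ^ c - x) := Nat.dvd_sub h h3
  have h6 : (x ^ c + 1) - (x ^ c - x) = x + 1 := by omega
  rw [h6] at h5
  have := Nat.le_of_dvd (by omega) h5
  omega

theorem gcd_pow_add_one_pow_sub_one (p m k : ℕ) (hp : p.Prime) (hodd : Odd p)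
    (hm : 0 < m) (hk : 0 < k) :
    (padicValNat 2 k < padicValNat 2 m →
      Nat.gcd (p ^ k + 1) (p ^ m - 1) = p ^ Nat.gcd k m + 1) ∧
    (padicValNat 2 m ≤ padicValNat 2 k →
      Nat.gcd (p ^ k + 1) (p ^ m - 1) = 2) := by
  haveI : Fact (Nat.Prime 2) := ⟨Nat.prime_two⟩
  have hppos : 0 < p := hp.pos
  have hpk1 : 1 ≤ p ^ k := Nat.one_le_pow _ _ hppos
  have hpm1 : 1 ≤ p ^ m := Nat.one_le_pow _ _ hppos
  set g := Nat.gcd (p ^ k + 1) (p ^ m - 1) with hgdef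
  have hg1 : g ∣ p ^ k + 1 := Nat.gcd_dvd_left _ _
  have hg2 : g ∣ p ^ m - 1 := Nat.gcd_dvd_right _ _
  have hgpos : 0 < g := Nat.gcd_pos_of_pos_left _ (by positivity)
  -- g divides p^(2k) - 1
  have hsq : p ^ (2 * k) - 1 = (p ^ k + 1) * (p ^ k - 1) := by
    have h := Nat.sq_sub_sq (p ^ k) 1
    rw [one_pow] at h
    rw [mul_comm 2 k, pow_mul, h]
  have h2k : g ∣ p ^ (2 * k) - 1 := by
    rw [hsq]; exact hg1.trans (Dvd.intro _ rfl)
  -- 2 divides g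
  have heven1 : 2 ∣ p ^ k + 1 := (hodd.pow).add_one.two_dvd
  have heven2 : 2 ∣ p ^ m - 1 := (Nat.Odd.sub_odd (hodd.pow) odd_one).two_dvd
  have h2g : 2 ∣ g := Nat.dvd_gcd heven1 heven2
  constructor
  · -- Part 1 : v2 k < v2 m
    intro hv
    set d := Nat.gcd k m with hddef
    have hd : 0 < d := Nat.gcd_pos_of_pos_left _ hk
    have hdk : d ∣ k := Nat.gcd_dvd_left k m
    have hdm : d ∣ m := Nat.gcd_dvd_right k m
    have hpd1 : 1 ≤ p ^ d := Nat.one_le_pow _ _ hppos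
    -- v2 d = v2 k
    have hvd : padicValNat 2 d = padicValNat 2 k := by
      have hfg := Nat.factorization_gcd hk.ne' hm.ne'
      have h2 : d.factorization 2 = min (k.factorization 2) (m.factorization 2) := by
        rw [hddef, hfg]; rfl
      rw [Nat.factorization_def _ Nat.prime_two, Nat.factorization_def _ Nat.prime_two,
        Nat.factorization_def _ Nat.prime_two] at h2
      omega
    -- c := k / d is odd
    obtain ⟨c, hc⟩ := hdk
    have hcpos : 0 < c := by
      rcases Nat.eq_zero_or_pos c with rfl | h; · omega
      exact h
    have hcodd : Odd c := by
      have hmul : padicValNat 2 k = padicValNat 2 d + padicValNat 2 c := by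
        rw [hc]; exact padicValNat.mul hd.ne' hcpos.ne'
      have hc0 : padicValNat 2 c = 0 := by omega
      have : ¬ (2 ∣ c) := by
        intro hdvd
        have := (padicValNat_dvd_iff_le (p := 2) hcpos.ne').mp (by rw [pow_one]; exact hdvd)
        omega
      exact Nat.odd_iff.mpr (by omega)
    -- 2d ∣ m
    have h2dm : 2 * d ∣ m := two_mul_dvd_of_lt hd hdm (by omega)
    -- p^d + 1 divides g
    have hA1 : p ^ d + 1 ∣ p ^ k + 1 := by
      have := Odd.nat_add_dvd_pow_add_pow (p ^ d) 1 hcodd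
      simpa [hc, pow_mul] using this
    have hsqd : p ^ (2 * d) - 1 = (p ^ d + 1) * (p ^ d - 1) := by
      have h := Nat.sq_sub_sq (p ^ d) 1
      rw [one_pow] at h
      rw [mul_comm 2 d, pow_mul, h]
    have hA2 : p ^ d + 1 ∣ p ^ m - 1 := by
      refine dvd_trans ?_ (pow_sub_one_dvd_pow_sub_one p (2 * d) m h2dm)
      rw [hsqd]; exact Dvd.intro _ rfl
    have hAg : p ^ d + 1 ∣ g := Nat.dvd_gcd hA1 hA2
    -- gcd (2k) m = 2d
    have hgcd2 : Nat.gcd (2 * k) m = 2 * d := by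
      apply Nat.dvd_antisymm
      · have h1 : Nat.gcd (2 * k) m ∣ Nat.gcd (2 * k) (2 * m) :=
          Nat.dvd_gcd (Nat.gcd_dvd_left _ _) ((Nat.gcd_dvd_right _ _).trans ⟨2, by ring⟩)
        rwa [Nat.gcd_mul_left] at h1
      · exact Nat.dvd_gcd (mul_dvd_mul_left 2 (Dvd.intro c hc.symm)) h2dm
    -- g ∣ p^(2d) - 1
    have hup : g ∣ p ^ (2 * d) - 1 := by
      have := gcd_pow_dvd hgpos hppos h2k hg2
      rwa [hgcd2] at this
    obtain ⟨t, ht⟩ := hAg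
    have hApos : 0 < p ^ d + 1 := by positivity
    have htpd : t ∣ p ^ d - 1 := by
      rw [ht, hsqd] at hup
      exact (mul_dvd_mul_iff_left hApos.ne').mp hup
    have htk : t ∣ p ^ k - 1 := htpd.trans (pow_sub_one_dvd_pow_sub_one p d k ⟨c, hc⟩)
    have htk1 : t ∣ p ^ k + 1 := (Dvd.intro_left _ ht.symm).trans hg1
    have ht2 : t ∣ 2 := by
      have := Nat.dvd_sub htk1 htk
      have heq : (p ^ k + 1) - (p ^ k - 1) = 2 := by omega
      rwa [heq] at this
    rcases (Nat.dvd_prime Nat.prime_two).mp ht2 with rfl | rfl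
    · rw [ht, mul_one]
    · exfalso
      have hbad : 2 * (p ^ d + 1) ∣ p ^ k + 1 := by
        have : g = 2 * (p ^ d + 1) := by rw [ht]; ring
        exact this ▸ hg1
      have hxodd : Odd (p ^ d) := hodd.pow
      refine not_two_mul_dvd hxodd hpd1 hcodd ?_
      rwa [← pow_mul, ← hc]
  · -- Part 2 : v2 m ≤ v2 k
    intro hv
    set e := Nat.gcd (2 * k) m with hedef
    have hepos : 0 < e := Nat.gcd_pos_of_pos_left _ (by omega)
    have he2k : e ∣ 2 * k := Nat.gcd_dvd_left _ _
    have hem : e ∣ m := Nat.gcd_dvd_right _ _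
    have hvem : padicValNat 2 e ≤ padicValNat 2 m := by
      apply (padicValNat_dvd_iff_le hm.ne').mp
      exact pow_padicValNat_dvd.trans hem
    have hek : e ∣ k := dvd_of_dvd_two_mul hepos he2k (by omega)
    have hge : g ∣ p ^ e - 1 := gcd_pow_dvd hgpos hppos h2k hg2
    have hgk : g ∣ p ^ k - 1 := hge.trans (pow_sub_one_dvd_pow_sub_one p e k hek)
    have hg2' : g ∣ 2 := by
      have := Nat.dvd_sub hg1 hgk
      have heq : (p ^ k + 1) - (p ^ k - 1) = 2 := by omega
      rwa [heq] at this
    exact Nat.dvd_antisymm hg2' h2g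
end

section
/- For every integer t ≥ 1 and all a, b ∈ F_{p^m}, the Hamming weight of the codeword c_t(a,b) satisfies wt(c_t(a,b)) = p^m − p^{m−1} − (1/(2p)) · Σ_{u∈F_p^*} Σ_{x∈F_{p^m}} ( ζ_p^{u·Tr((a+b) x^{2t})} + ζ_p^{u·Tr((a−b) π^{t} x^{2t})} ), where the right-hand side is an equality of complex numbers (the weight being cast to ℂ). -/
open Finset

lemma sum_range_even_odd (g : ℕ → ℂ) (M : ℕ) :
    ∑ i ∈ range (2 * M), g i = ∑ j ∈ range M, g (2 * j) + ∑ j ∈ range M, g (2 * j + 1) := by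
  induction M with
  | zero => simp
  | succ M ih =>
    rw [show 2 * (M + 1) = 2 * M + 1 + 1 by ring, sum_range_succ, sum_range_succ, ih,
      sum_range_succ, sum_range_succ]
    ring

lemma sum_range_double (A : ℕ → ℂ) (M : ℕ) (hA : ∀ j, A (M + j) = A j) :
    ∑ k ∈ range (2 * M), A k = 2 * ∑ j ∈ range M, A j := by
  rw [two_mul, Finset.sum_range_add]
  simp only [hA]
  ring

lemma orth {p : ℕ} [Fact p.Prime] {ζ : ℂ} (hζ : IsPrimitiveRoot ζ p) (y : ZMod p) :
    ∑ u : ZMod p, ζ ^ ((u * y).val) = if y = 0 then (p : ℂ) else 0 := by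
  have hp : p.Prime := Fact.out
  rcases eq_or_ne y 0 with rfl | hy
  · simp [ZMod.card]
  · rw [if_neg hy]
    have h1 : ∑ u : ZMod p, ζ ^ ((u * y).val) = ∑ v : ZMod p, ζ ^ v.val :=
      Fintype.sum_equiv (Equiv.mulRight₀ y hy) _ _ (fun u => rfl)
    have h2 : ∑ v : ZMod p, ζ ^ v.val = ∑ k ∈ range p, ζ ^ k := by
      refine Finset.sum_nbij' (fun v => v.val) (fun k => (k : ZMod p)) ?_ ?_ ?_ ?_ ?_
      · intro v _; exact mem_range.2 (ZMod.val_lt v)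
      · intro k _; exact mem_univ _
      · intro v _; exact ZMod.natCast_zmod_val v
      · intro k hk; exact ZMod.val_cast_of_lt (mem_range.1 hk)
      · intro v _; rfl
    rw [h1, h2, hζ.geom_sum_eq_zero hp.one_lt]

lemma sum_units_split {K : Type*} [Field K] [Fintype K] [DecidableEq K] (h : K → ℂ) :
    ∑ x : K, h x = h 0 + ∑ x : Kˣ, h ↑x := by
  classical
  rw [← Finset.add_sum_erase _ _ (Finset.mem_univ (0 : K))]
  congr 1
  rw [Finset.sum_subtype (p := fun x : K => x ≠ 0) (univ.erase (0 : K)) (by simp) h]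
  exact (Fintype.sum_equiv unitsEquivNeZero _ _ (fun u => rfl)).symm

lemma sum_units_pow {K : Type*} [Field K] [Fintype K] [DecidableEq K] (g : Kˣ) {n : ℕ}
    (hg : orderOf g = n) (hcard : Fintype.card Kˣ = n) (h : Kˣ → ℂ) :
    ∑ x : Kˣ, h x = ∑ k ∈ range n, h (g ^ k) := by
  subst hg
  rw [← Fin.sum_univ_eq_sum_range (fun k => h (g ^ k)) (orderOf g)]
  refine (Fintype.sum_bijective (fun k : Fin (orderOf g) => g ^ (k : ℕ)) ?_ _ _ (fun k => rfl)).symm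
  rw [Fintype.bijective_iff_injective_and_card]
  refine ⟨fun i j hij => Fin.ext (pow_injOn_Iio_orderOf i.isLt j.isLt hij), by simp [hcard]⟩

theorem weight_formula (p m : ℕ) [Fact p.Prime] (hodd : Odd p) (hm : 0 < m)
    (F : Type) [Field F] [Fintype F] [Algebra (ZMod p) F]
    (hcard : Fintype.card F = p ^ m)
    (π : F) (hπ : orderOf π = p ^ m - 1)
    (ζ : ℂ) (hζ : IsPrimitiveRoot ζ p)
    (t : ℕ) (ht : 1 ≤ t) (a b : F) :
    ((Finset.univ.filter (fun i : Fin (p ^ m - 1) =>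
        Algebra.trace (ZMod p) F (a * π ^ (t * (i : ℕ)) + b * (-(π ^ t)) ^ (i : ℕ)) ≠ 0)).card : ℂ)
      = (p : ℂ) ^ m - (p : ℂ) ^ (m - 1) -
        (1 / (2 * (p : ℂ))) *
          ∑ u : (ZMod p)ˣ, ∑ x : F,
            (ζ ^ (((u : ZMod p) * Algebra.trace (ZMod p) F ((a + b) * x ^ (2 * t))).val)
             + ζ ^ (((u : ZMod p) * Algebra.trace (ZMod p) F ((a - b) * π ^ t * x ^ (2 * t))).val)) := by
  classical
  have hp : p.Prime := Fact.out
  have hp2 : 2 ≤ p := hp.two_le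
  have hp3 : 3 ≤ p := by
    rcases hodd with ⟨k, hk⟩; omega
  have hq3 : 3 ≤ p ^ m := le_trans hp3 (Nat.le_self_pow (by omega) p)
  set n := p ^ m - 1 with hn
  have hqodd : Odd (p ^ m) := hodd.pow
  obtain ⟨M, hM⟩ : ∃ M, n = 2 * M := by
    rcases hqodd with ⟨k, hk⟩
    exact ⟨k, by omega⟩
  have hπn : π ^ n = 1 := by rw [← hπ]; exact pow_orderOf_eq_one π
  have hπ0 : π ≠ 0 := by
    intro h
    rw [h, zero_pow (by omega : n ≠ 0)] at hπn
    exact zero_ne_one hπn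
  set gU : Fˣ := Units.mk0 π hπ0 with hgU
  have hgord : orderOf gU = n := by rw [← orderOf_units]; exact hπ
  have hcardU : Fintype.card Fˣ = n := by rw [Fintype.card_units, hcard]
  have hpC : (p : ℂ) ≠ 0 := Nat.cast_ne_zero.2 hp.pos.ne'
  -- Step 1 : indicator expansion
  have step1 : ((Finset.univ.filter (fun i : Fin n =>
        Algebra.trace (ZMod p) F (a * π ^ (t * (i : ℕ)) + b * (-(π ^ t)) ^ (i : ℕ)) ≠ 0)).card : ℂ)
      = ∑ i ∈ range n, (1 - (1 / (p : ℂ)) * ∑ u : ZMod p,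
          ζ ^ ((u * Algebra.trace (ZMod p) F (a * π ^ (t * i) + b * (-(π ^ t)) ^ i)).val)) := by
    rw [Finset.card_filter, Nat.cast_sum,
      ← Fin.sum_univ_eq_sum_range (fun i => (1 - (1 / (p : ℂ)) * ∑ u : ZMod p,
          ζ ^ ((u * Algebra.trace (ZMod p) F (a * π ^ (t * i) + b * (-(π ^ t)) ^ i)).val)) ) n]
    refine Finset.sum_congr rfl fun i _ => ?_
    rw [orth hζ]
    push_cast
    rcases eq_or_ne (Algebra.trace (ZMod p) F (a * π ^ (t * (i : ℕ)) + b * (-(π ^ t)) ^ (i : ℕ))) 0 with h | h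
    · rw [if_neg (by simp [h]), if_pos h]
      field_simp
      norm_num
    · rw [if_pos h, if_neg h]
      ring
  have hgen : ∀ (u : (ZMod p)ˣ) (c : F),
      ∑ x : F, ζ ^ (((u : ZMod p) * Algebra.trace (ZMod p) F (c * x ^ (2 * t))).val)
      = 1 + ∑ k ∈ range n, ζ ^ (((u : ZMod p) * Algebra.trace (ZMod p) F (c * π ^ (2 * t * k))).val) := by
    intro u c
    rw [sum_units_split (fun x : F => ζ ^ (((u : ZMod p) * Algebra.trace (ZMod p) F (c * x ^ (2 * t))).val))]
    congr 1
    · rw [zero_pow (by omega : 2 * t ≠ 0), mul_zero, map_zero, mul_zero, ZMod.val_zero, pow_zero]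
    · rw [sum_units_pow gU hgord hcardU]
      refine Finset.sum_congr rfl fun k _ => ?_
      have hcoe : ((gU ^ k : Fˣ) : F) = π ^ k := by
        rw [Units.val_pow_eq_pow_val]; rfl
      rw [hcoe]
      have hpow : (π ^ k) ^ (2 * t) = π ^ (2 * t * k) := by
        rw [← pow_mul, Nat.mul_comm k (2 * t)]
      rw [hpow]
  have hB : ∀ u : (ZMod p)ˣ,
      ∑ i ∈ range n, ζ ^ (((u : ZMod p) * Algebra.trace (ZMod p) F (a * π ^ (t * i) + b * (-(π ^ t)) ^ i)).val)
      = (1/2) * ((∑ x : F, ζ ^ (((u : ZMod p) * Algebra.trace (ZMod p) F ((a + b) * x ^ (2 * t))).val))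
          + ∑ x : F, ζ ^ (((u : ZMod p) * Algebra.trace (ZMod p) F ((a - b) * π ^ t * x ^ (2 * t))).val)) - 1 := by
    intro u
    have heven : ∀ j : ℕ, a * π ^ (t * (2 * j)) + b * (-(π ^ t)) ^ (2 * j) = (a + b) * π ^ (2 * t * j) := by
      intro j
      rw [Even.neg_pow (even_two_mul j)]
      ring
    have hoddj : ∀ j : ℕ, a * π ^ (t * (2 * j + 1)) + b * (-(π ^ t)) ^ (2 * j + 1)
        = (a - b) * π ^ t * π ^ (2 * t * j) := by
      intro j
      rw [Odd.neg_pow (odd_two_mul_add_one j)]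
      ring
    have hper : ∀ (c : F) (j : ℕ),
        ζ ^ (((u : ZMod p) * Algebra.trace (ZMod p) F (c * π ^ (2 * t * (M + j)))).val)
        = ζ ^ (((u : ZMod p) * Algebra.trace (ZMod p) F (c * π ^ (2 * t * j))).val) := by
      intro c j
      have hpow : π ^ (2 * t * (M + j)) = π ^ (2 * t * j) := by
        rw [show 2 * t * (M + j) = n * t + 2 * t * j by rw [hM]; ring, pow_add, pow_mul, hπn,
          one_pow, one_mul]
      rw [hpow]
    rw [hgen u (a + b), hgen u ((a - b) * π ^ t), hM, sum_range_even_odd,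
      sum_range_double (fun k => ζ ^ (((u : ZMod p) * Algebra.trace (ZMod p) F ((a + b) * π ^ (2 * t * k))).val)) M (fun j => hper (a + b) j),
      sum_range_double (fun k => ζ ^ (((u : ZMod p) * Algebra.trace (ZMod p) F ((a - b) * π ^ t * π ^ (2 * t * k))).val)) M (fun j => hper ((a - b) * π ^ t) j)]
    have h1 : ∀ j ∈ range M,
        ζ ^ (((u : ZMod p) * Algebra.trace (ZMod p) F (a * π ^ (t * (2 * j)) + b * (-(π ^ t)) ^ (2 * j))).val)
        = ζ ^ (((u : ZMod p) * Algebra.trace (ZMod p) F ((a + b) * π ^ (2 * t * j))).val) := by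
      intro j _; rw [heven j]
    have h2 : ∀ j ∈ range M,
        ζ ^ (((u : ZMod p) * Algebra.trace (ZMod p) F (a * π ^ (t * (2 * j + 1)) + b * (-(π ^ t)) ^ (2 * j + 1))).val)
        = ζ ^ (((u : ZMod p) * Algebra.trace (ZMod p) F ((a - b) * π ^ t * π ^ (2 * t * j))).val) := by
      intro j _; rw [hoddj j]
    rw [Finset.sum_congr rfl h1, Finset.sum_congr rfl h2]
    ring
  have split0 : ∀ i : ℕ, ∑ u : ZMod p,
      ζ ^ ((u * Algebra.trace (ZMod p) F (a * π ^ (t * i) + b * (-(π ^ t)) ^ i)).val)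
      = 1 + ∑ u : (ZMod p)ˣ,
        ζ ^ (((u : ZMod p) * Algebra.trace (ZMod p) F (a * π ^ (t * i) + b * (-(π ^ t)) ^ i)).val) := by
    intro i
    rw [sum_units_split (fun y : ZMod p =>
      ζ ^ ((y * Algebra.trace (ZMod p) F (a * π ^ (t * i) + b * (-(π ^ t)) ^ i)).val))]
    congr 1
    rw [zero_mul, ZMod.val_zero, pow_zero]
  rw [step1, Finset.sum_sub_distrib, Finset.sum_const, Finset.card_range, ← Finset.mul_sum,
    Finset.sum_congr rfl (fun i _ => split0 i), Finset.sum_add_distrib, Finset.sum_const,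
    Finset.card_range, Finset.sum_comm, Finset.sum_congr rfl (fun u _ => hB u),
    Finset.sum_sub_distrib, Finset.sum_const, ← Finset.mul_sum]
  have hT : ∑ u : (ZMod p)ˣ, ((∑ x : F, ζ ^ (((u : ZMod p) * Algebra.trace (ZMod p) F ((a + b) * x ^ (2 * t))).val))
          + ∑ x : F, ζ ^ (((u : ZMod p) * Algebra.trace (ZMod p) F ((a - b) * π ^ t * x ^ (2 * t))).val))
      = ∑ u : (ZMod p)ˣ, ∑ x : F,
            (ζ ^ (((u : ZMod p) * Algebra.trace (ZMod p) F ((a + b) * x ^ (2 * t))).val)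
             + ζ ^ (((u : ZMod p) * Algebra.trace (ZMod p) F ((a - b) * π ^ t * x ^ (2 * t))).val)) :=
    Finset.sum_congr rfl fun u _ => (Finset.sum_add_distrib).symm
  rw [hT]
  have hcardZU : (Finset.univ : Finset (ZMod p)ˣ).card = p - 1 := by
    rw [Finset.card_univ, Fintype.card_units, ZMod.card]
  rw [hcardZU]
  have hncast : (n : ℂ) = (p : ℂ) ^ m - 1 := by
    rw [hn, Nat.cast_sub (Nat.one_le_pow _ _ hp.pos), Nat.cast_pow, Nat.cast_one]
  have hp1cast : ((p - 1 : ℕ) : ℂ) = (p : ℂ) - 1 := by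
    rw [Nat.cast_sub (by omega), Nat.cast_one]
  have hpm : (p : ℂ) ^ m = (p : ℂ) ^ (m - 1) * p := by
    rw [← pow_succ, Nat.sub_add_cancel hm]
  simp only [nsmul_eq_mul, smul_eq_mul, mul_one, hncast, hp1cast]
  rw [hpm]
  field_simp
  ring_nf
  simp only [mul_right_comm _ _ (π ^ t)]
end

section
/- Let t, e ∈ {1, …, p^m−2} be positive integers such that t ≡ e·p^τ (mod (p^m−1)/2) for some τ ∈ {0,1,…,m−1}. Then the cyclic codes C_t and C_e have the same weight distribution: for every natural number w, the number of pairs (a,b) ∈ F_{p^m}^2 with wt(c_t(a,b)) = w equals the number of pairs (a,b) ∈ F_{p^m}^2 with wt(c_e(a,b)) = w. -/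
open Finset

section Aux

variable (p : ℕ) [Fact p.Prime] (F : Type) [Field F] [Fintype F] [Algebra (ZMod p) F]

lemma my_charP : CharP F p :=
  charP_of_injective_algebraMap (algebraMap (ZMod p) F).injective p

/-- Trace over `ZMod p` is invariant under iterated Frobenius. -/
lemma trace_frob_pow (k : ℕ) (x : F) :
    Algebra.trace (ZMod p) F (x ^ p ^ k) = Algebra.trace (ZMod p) F x := by
  haveI : CharP F p := my_charP p F
  induction k with
  | zero => simp
  | succ k ih =>
    have hp : p.Prime := Fact.out
    let φ : F ≃ₐ[ZMod p] F := AlgEquiv.ofBijective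
      { toRingHom := frobenius F p
        commutes' := fun c => by
          simp only [RingHom.toMonoidHom_eq_coe, OneHom.toFun_eq_coe, MonoidHom.toOneHom_coe,
            MonoidHom.coe_coe, frobenius_def]
          rw [← map_pow, ZMod.pow_card] }
      (Finite.injective_iff_bijective.mp (frobenius F p).injective)
    have hφ : ∀ y : F, Algebra.trace (ZMod p) F (y ^ p) = Algebra.trace (ZMod p) F y := by
      intro y
      have := Algebra.trace_eq_of_algEquiv φ y
      simpa [φ, frobenius_def] using this
    rw [pow_succ, pow_mul, hφ, ih]

lemma card_filter_eq_of_bij {α : Type*} [Fintype α] (σ : α → α) (hσ : Function.Bijective σ)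
    (f g : α → ℕ) (hfg : ∀ x, f x = g (σ x)) (w : ℕ)
    [DecidablePred fun x => f x = w] [DecidablePred fun x => g x = w] :
    (univ.filter (fun x => f x = w)).card = (univ.filter (fun x => g x = w)).card := by
  apply Finset.card_bij (fun x _ => σ x)
  · intro a ha
    simp only [mem_filter, mem_univ, true_and] at ha ⊢
    rw [← hfg]; exact ha
  · intro a _ b _ h
    exact hσ.1 h
  · intro b hb
    simp only [mem_filter, mem_univ, true_and] at hb
    obtain ⟨a, rfl⟩ := hσ.2 b
    exact ⟨a, by simp only [mem_filter, mem_univ, true_and]; rw [hfg]; exact hb, rfl⟩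

end Aux

theorem same_weight_distribution (p m : ℕ) [Fact p.Prime] (hodd : Odd p) (hm : 0 < m)
    (F : Type) [Field F] [Fintype F] [DecidableEq F] [Algebra (ZMod p) F]
    (hcard : Fintype.card F = p ^ m)
    (π : F) (hπ : orderOf π = p ^ m - 1)
    (t e : ℕ) (ht1 : 1 ≤ t) (ht2 : t ≤ p ^ m - 2) (he1 : 1 ≤ e) (he2 : e ≤ p ^ m - 2)
    (τ : ℕ) (hτ : τ < m) (hcong : t ≡ e * p ^ τ [MOD (p ^ m - 1) / 2]) :
    ∀ w : ℕ,
      (Finset.univ.filter (fun ab : F × F =>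
        (Finset.univ.filter (fun i : Fin (p ^ m - 1) =>
          Algebra.trace (ZMod p) F
            (ab.1 * π ^ (t * (i : ℕ)) + ab.2 * (-(π ^ t)) ^ (i : ℕ)) ≠ 0)).card = w)).card
      =
      (Finset.univ.filter (fun ab : F × F =>
        (Finset.univ.filter (fun i : Fin (p ^ m - 1) =>
          Algebra.trace (ZMod p) F
            (ab.1 * π ^ (e * (i : ℕ)) + ab.2 * (-(π ^ e)) ^ (i : ℕ)) ≠ 0)).card = w)).card := by
  intro w
  haveI : CharP F p := my_charP p F
  have hp : p.Prime := Fact.out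
  have hp3 : 3 ≤ p := by
    obtain ⟨k, hk⟩ := hodd; have := hp.two_le; omega
  -- basic numerology
  set n : ℕ := p ^ m - 1 with hn
  have hpm3 : 3 ≤ p ^ m := le_trans hp3 (Nat.le_self_pow hm.ne' p)
  have hn2 : 2 ≤ n := by omega
  have hnodd : Odd (p ^ m) := hodd.pow
  have hneven : Even n := by
    obtain ⟨k, hk⟩ := hnodd
    have : n = 2 * k := by omega
    exact ⟨k, by omega⟩
  set d : ℕ := n / 2 with hd
  have hd2 : 2 * d = n := by
    obtain ⟨k, hk⟩ := hneven; omega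
  have hd1 : 1 ≤ d := by omega
  have hdn : d < n := by omega
  -- π ^ d = -1
  have hπd : π ^ d = -1 := by
    have hsq : (π ^ d) ^ 2 = 1 := by
      rw [← pow_mul, mul_comm, hd2, ← hπ, pow_orderOf_eq_one]
    rcases sq_eq_one_iff.mp hsq with h1 | h1
    · exfalso
      have := orderOf_dvd_of_pow_eq_one h1
      rw [hπ] at this
      exact absurd (Nat.le_of_dvd hd1 this) (by omega)
    · exact h1
  have hdecomp : ∀ s : ℕ, π ^ s = (-1 : F) ^ (s / d) * π ^ (s % d) := by
    intro s
    conv_lhs => rw [← Nat.div_add_mod s d]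
    rw [pow_add, pow_mul, hπd]
  -- dichotomy
  have hdich : π ^ t = π ^ (e * p ^ τ) ∨ π ^ t = -π ^ (e * p ^ τ) := by
    have hmod : t % d = (e * p ^ τ) % d := hcong
    have h1 := hdecomp t
    have h2 := hdecomp (e * p ^ τ)
    rw [hmod] at h1
    have hvv : ((-1 : F) ^ (e * p ^ τ / d)) * ((-1 : F) ^ (e * p ^ τ / d)) = 1 := by
      rw [← pow_add]; exact Even.neg_one_pow ⟨_, rfl⟩
    have h3 : π ^ t = (-1 : F) ^ (t / d + (e * p ^ τ) / d) * π ^ (e * p ^ τ) := by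
      rw [pow_add, mul_assoc, h2, h1]
      congr 1
      rw [← mul_assoc, hvv, one_mul]
    rcases Nat.even_or_odd (t / d + (e * p ^ τ) / d) with hpar | hpar
    · left; rw [h3, hpar.neg_one_pow, one_mul]
    · right; rw [h3, hpar.neg_one_pow]; ring
  -- Frobenius power setup
  set Q : ℕ := p ^ (m - τ) with hQ
  have hQP : ∀ x : F, (x ^ Q) ^ p ^ τ = x := by
    intro x
    rw [← pow_mul, hQ, ← pow_add, Nat.sub_add_cancel hτ.le, ← hcard, FiniteField.pow_card]
  have hPodd : Odd (p ^ τ) := hodd.pow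
  have hψbij : Function.Bijective (fun x : F => x ^ Q) := by
    have : (fun x : F => x ^ Q) = iterateFrobenius F p (m - τ) := by
      funext x; rw [iterateFrobenius_def]
    rw [this]
    exact Finite.injective_iff_bijective.mp (iterateFrobenius F p (m - τ)).injective
  -- per-index trace identities
  rcases hdich with hcase | hcase
  · -- π ^ t = π ^ (e * p ^ τ); σ (a,b) = (a^Q, b^Q)
    have hkey : ∀ (a b : F) (i : ℕ),
        a * π ^ (t * i) + b * (-(π ^ t)) ^ i
          = (a ^ Q * π ^ (e * i) + b ^ Q * (-(π ^ e)) ^ i) ^ p ^ τ := by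
      intro a b i
      have h1 : π ^ (t * i) = (π ^ (e * i)) ^ p ^ τ := by
        rw [pow_mul, hcase, ← pow_mul, ← pow_mul]
        congr 1; ring
      have h2 : (-(π ^ t)) ^ i = ((-(π ^ e)) ^ i) ^ p ^ τ := by
        rw [← pow_mul, mul_comm i (p ^ τ), pow_mul, hPodd.neg_pow, ← pow_mul, ← hcase]
      rw [add_pow_char_pow, mul_pow, mul_pow, hQP, hQP, h1, h2]
    refine card_filter_eq_of_bij (fun ab : F × F => (ab.1 ^ Q, ab.2 ^ Q))
      ⟨fun a b h =>
        Prod.ext (hψbij.1 (congrArg Prod.fst h)) (hψbij.1 (congrArg Prod.snd h)),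
       fun c => by
        obtain ⟨x, hx⟩ := hψbij.2 c.1
        obtain ⟨y, hy⟩ := hψbij.2 c.2
        exact ⟨(x, y), by simp [hx, hy]⟩⟩
      _ _ (fun ab => ?_) w
    congr 1
    apply Finset.filter_congr
    intro i _
    rw [hkey ab.1 ab.2 (i : ℕ), trace_frob_pow]
  · -- π ^ t = -π ^ (e * p ^ τ); σ (a,b) = (b^Q, a^Q)
    have hcase' : -π ^ t = π ^ (e * p ^ τ) := by rw [hcase, neg_neg]
    have hkey : ∀ (a b : F) (i : ℕ),
        a * π ^ (t * i) + b * (-(π ^ t)) ^ i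
          = (b ^ Q * π ^ (e * i) + a ^ Q * (-(π ^ e)) ^ i) ^ p ^ τ := by
      intro a b i
      have h1 : (-(π ^ t)) ^ i = (π ^ (e * i)) ^ p ^ τ := by
        rw [hcase', ← pow_mul, ← pow_mul]
        congr 1; ring
      have h2 : π ^ (t * i) = ((-(π ^ e)) ^ i) ^ p ^ τ := by
        rw [pow_mul, hcase, ← pow_mul, mul_comm i (p ^ τ),
          pow_mul (-(π ^ e)) (p ^ τ) i, hPodd.neg_pow, ← pow_mul]
      rw [add_pow_char_pow, mul_pow, mul_pow, hQP, hQP, h1, h2, add_comm]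
    refine card_filter_eq_of_bij (fun ab : F × F => (ab.2 ^ Q, ab.1 ^ Q))
      ⟨fun a b h => by
        have h1 := hψbij.1 (congrArg Prod.fst h)
        have h2 := hψbij.1 (congrArg Prod.snd h)
        exact Prod.ext h2 h1,
       fun c => by
        obtain ⟨x, hx⟩ := hψbij.2 c.2
        obtain ⟨y, hy⟩ := hψbij.2 c.1
        exact ⟨(x, y), by simp [hx, hy]⟩⟩
      _ _ (fun ab => ?_) w
    congr 1
    apply Finset.filter_congr
    intro i _
    rw [hkey ab.1 ab.2 (i : ℕ), trace_frob_pow]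
end

section
/- Suppose π^{((p^k+1)/2)·p^i} ≠ −π^{(p^k+1)/2} for all i ∈ {0,1,…,m−1}. Then the minimal polynomial of π^{−(p^k+1)/2} over F_p has degree m, and the minimal polynomial of −π^{−(p^k+1)/2} over F_p also has degree m. -/
open Module

lemma arith_aux {p m d k : ℕ} (hp : 3 ≤ p) (hpodd : Odd p)
    (hd0 : 0 < d) (hdm : d < m) (hdvd : d ∣ m)
    (h : p ^ m - 1 ∣ (p ^ k + 1) / 2 * (p ^ d - 1)) : False := by
  have hp1 : 1 < p := by omega
  have hm0 : 0 < m := lt_trans hd0 hdm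
  have hpd1 : 1 < p ^ d := Nat.one_lt_pow hd0.ne' hp1
  have hpm1 : 1 < p ^ m := Nat.one_lt_pow hm0.ne' hp1
  obtain ⟨s, hs⟩ := hdvd
  have hs2 : 2 ≤ s := by
    match s, hs with
    | 0, hs => omega
    | 1, hs => omega
    | (n+2), hs => omega
  have h2d : 2 * d ≤ m := by
    have := Nat.mul_le_mul_left d hs2
    omega
  have hdvd1 : (p ^ d - 1) ∣ (p ^ m - 1) := by
    have hpm : p ^ m = (p ^ d) ^ s := by rw [← pow_mul, ← hs]
    rw [hpm]
    simpa using Nat.sub_dvd_pow_sub_pow (p ^ d) 1 s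
  obtain ⟨T, hT⟩ := hdvd1
  have hTpos : 0 < T := by
    rcases Nat.eq_zero_or_pos T with h0 | h0
    · rw [h0, Nat.mul_zero] at hT; omega
    · exact h0
  set e := (p ^ k + 1) / 2 with he_def
  have hpk_odd : Odd (p ^ k) := hpodd.pow
  have he : 2 * e = p ^ k + 1 := by
    obtain ⟨c, hc⟩ := hpk_odd
    rw [he_def]; omega
  have hTe : T ∣ e := by
    rw [hT] at h
    exact (Nat.mul_dvd_mul_iff_left (show 0 < p ^ d - 1 by omega)).mp
      (by rwa [mul_comm e (p ^ d - 1)] at h)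
  set M := 2 * T with hM_def
  have hMpk : M ∣ p ^ k + 1 := by rw [← he]; exact Nat.mul_dvd_mul_left 2 hTe
  have hev : 2 ∣ p ^ d - 1 := by
    obtain ⟨c, hc⟩ := hpodd.pow (n := d)
    omega
  have hMm : M ∣ p ^ m - 1 := by
    rw [hT]
    exact Nat.mul_dvd_mul hev dvd_rfl
  have hTbig : p ^ (m - d) ≤ T := by
    have h1 : p ^ d * T - T = p ^ m - 1 := by
      rw [hT, Nat.sub_mul, one_mul]
    have h2 : T ≤ p ^ d * T := Nat.le_mul_of_pos_left T (by omega)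
    have h3 : p ^ m ≤ p ^ d * T := by omega
    have h4 : p ^ m = p ^ d * p ^ (m - d) := by
      rw [← pow_add]; congr 1; omega
    rw [h4] at h3
    exact Nat.le_of_mul_le_mul_left h3 (by omega)
  have hpmd : p ≤ p ^ (m - d) := by
    calc p = p ^ 1 := (pow_one p).symm
    _ ≤ p ^ (m - d) := Nat.pow_le_pow_right (by omega) (by omega)
  have hM3 : 2 < M := by
    have : 3 ≤ T := le_trans (le_trans hp hpmd) hTbig
    omega
  haveI : NeZero M := ⟨by omega⟩
  haveI : Fact (2 < M) := ⟨hM3⟩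
  set x : ZMod M := (p : ZMod M) with hx_def
  -- facts about powers of x
  have key_neg : ∀ n : ℕ, M ∣ p ^ n + 1 → x ^ n = -1 := by
    intro n hn
    have h0 : ((p ^ n + 1 : ℕ) : ZMod M) = 0 :=
      (ZMod.natCast_eq_zero_iff _ _).mpr hn
    push_cast at h0
    exact eq_neg_of_add_eq_zero_left h0
  have key_neg' : ∀ n : ℕ, x ^ n = -1 → M ∣ p ^ n + 1 := by
    intro n hn
    have h0 : ((p ^ n + 1 : ℕ) : ZMod M) = 0 := by
      push_cast
      rw [hn]; ring
    exact (ZMod.natCast_eq_zero_iff _ _).mp h0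
  have key_one' : ∀ n : ℕ, x ^ n = 1 → M ∣ p ^ n - 1 := by
    intro n hn
    have h0 : ((p ^ n - 1 : ℕ) : ZMod M) = 0 := by
      rw [Nat.cast_sub (Nat.one_le_pow _ _ (by omega))]
      push_cast
      rw [hn]; ring
    exact (ZMod.natCast_eq_zero_iff _ _).mp h0
  have hxm : x ^ m = 1 := by
    have h0 : ((p ^ m - 1 : ℕ) : ZMod M) = 0 :=
      (ZMod.natCast_eq_zero_iff _ _).mpr hMm
    rw [Nat.cast_sub (Nat.one_le_pow _ _ (by omega))] at h0
    push_cast at h0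
    have := sub_eq_zero.mp h0
    exact this
  have hxk : x ^ k = -1 := key_neg k hMpk
  have hne1 : (-1 : ZMod M) ≠ 1 := ZMod.neg_one_ne_one
  have hfin : IsOfFinOrder x := by
    rw [isOfFinOrder_iff_pow_eq_one]
    exact ⟨m, hm0, hxm⟩
  set O := orderOf x with hO_def
  have hOpos : 0 < O := orderOf_pos_iff.mpr hfin
  have hOm : O ∣ m := orderOf_dvd_of_pow_eq_one hxm
  have hO2k : O ∣ 2 * k := by
    apply orderOf_dvd_of_pow_eq_one
    rw [mul_comm, pow_mul, hxk]
    ring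
  have hOk : ¬ O ∣ k := by
    intro hdk
    have : x ^ k = 1 := orderOf_dvd_iff_pow_eq_one.mp hdk
    rw [hxk] at this
    exact hne1 this
  -- M ∣ p^O - 1, so p^O large, so O = m
  have hMO : M ∣ p ^ O - 1 := key_one' O (pow_orderOf_eq_one x)
  have hpO : M ≤ p ^ O - 1 := Nat.le_of_dvd (by
    have : 1 < p ^ O := Nat.one_lt_pow hOpos.ne' hp1
    omega) hMO
  have hObig : m - d < O := by
    by_contra hOle
    push_neg at hOle
    have : p ^ O ≤ p ^ (m - d) := Nat.pow_le_pow_right (by omega) hOle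
    omega
  have hOeq : O = m := by
    obtain ⟨c, hc⟩ := hOm
    match c, hc with
    | 0, hc => omega
    | 1, hc => omega
    | (n+2), hc =>
      exfalso
      have h22 : O * 2 ≤ O * (n + 2) := Nat.mul_le_mul_left O (by omega)
      omega
  rw [hOeq] at hO2k hOk
  -- m even
  have hmeven : 2 ∣ m := by
    by_contra hmo
    exact hOk (Nat.Coprime.dvd_of_dvd_mul_left
      (Nat.coprime_comm.mp ((Nat.Prime.coprime_iff_not_dvd Nat.prime_two).mpr hmo)) hO2k)
  obtain ⟨hhalf, hh⟩ := hmeven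
  obtain ⟨t, ht⟩ := hO2k
  have htodd : Odd t := by
    rcases Nat.even_or_odd t with hte | hto
    · exfalso
      obtain ⟨t', ht'⟩ := hte
      refine hOk ⟨t', ?_⟩
      have h2 : m * t = 2 * (m * t') := by rw [ht']; ring
      omega
    · exact hto
  have hkht : k = hhalf * t := by
    have h2 : m * t = 2 * (hhalf * t) := by rw [hh]; ring
    omega
  -- x ^ hhalf = -1
  have hy2 : (x ^ hhalf) ^ 2 = 1 := by
    rw [← pow_mul]
    rw [show hhalf * 2 = m by omega]
    exact hxm
  have hyt : x ^ k = x ^ hhalf := by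
    obtain ⟨j, hj⟩ := htodd
    rw [hkht, hj, pow_mul, pow_add, pow_mul, hy2, one_pow, pow_one, one_mul]
  have hxh : x ^ hhalf = -1 := by rw [← hyt, hxk]
  have hMh : M ∣ p ^ hhalf + 1 := key_neg' hhalf hxh
  have hMle : M ≤ p ^ hhalf + 1 := Nat.le_of_dvd (by positivity) hMh
  -- but M ≥ 2 * p^(m-d) ≥ 2 * p^hhalf > p^hhalf + 1
  have hmd_h : hhalf ≤ m - d := by omega
  have hph : p ^ hhalf ≤ p ^ (m - d) := Nat.pow_le_pow_right (by omega) hmd_h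
  have hph1 : 1 < p ^ hhalf := Nat.one_lt_pow (by omega) hp1
  omega

/-- In a finite field of cardinality `p^m`, every element satisfies
`α ^ p ^ (deg minpoly) = α`, and the degree divides `m`. -/
lemma minpoly_aux (p m : ℕ) [Fact p.Prime] (hm : 0 < m)
    (F : Type) [Field F] [Fintype F] [Algebra (ZMod p) F]
    (hcard : Fintype.card F = p ^ m) (α : F) :
    0 < (minpoly (ZMod p) α).natDegree ∧ (minpoly (ZMod p) α).natDegree ∣ m ∧
      α ^ p ^ (minpoly (ZMod p) α).natDegree = α := by
  have hp1 : 1 < p := (Fact.out (p := p.Prime)).one_lt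
  have hin : IsIntegral (ZMod p) α := IsIntegral.of_finite _ _
  have hfr : finrank (ZMod p) F = m := by
    have hc := card_eq_pow_finrank (K := ZMod p) (V := F)
    rw [ZMod.card, hcard] at hc
    exact (Nat.pow_right_injective (Fact.out (p := p.Prime)).two_le hc.symm)
  refine ⟨minpoly.natDegree_pos hin, hfr ▸ minpoly.degree_dvd hin, ?_⟩
  set E := IntermediateField.adjoin (ZMod p) {α} with hE_def
  haveI : Finite E := Subtype.finite
  haveI : Fintype E := Fintype.ofFinite E
  have hmem : α ∈ E := IntermediateField.mem_adjoin_simple_self (ZMod p) α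
  have hEcard : Fintype.card E = p ^ (minpoly (ZMod p) α).natDegree := by
    rw [card_eq_pow_finrank (K := ZMod p) (V := E), ZMod.card,
      IntermediateField.adjoin.finrank hin]
  have hpow := FiniteField.pow_card (⟨α, hmem⟩ : E)
  rw [hEcard] at hpow
  have := congrArg (Subtype.val) hpow
  simpa using this

theorem minpoly_degree_eq (p m k : ℕ) [Fact p.Prime] (hodd : Odd p) (hm : 0 < m) (hk : 0 < k)
    (F : Type) [Field F] [Fintype F] [Algebra (ZMod p) F]
    (hcard : Fintype.card F = p ^ m)
    (π : F) (hπ : orderOf π = p ^ m - 1)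
    (hne : ∀ i < m, π ^ (((p ^ k + 1) / 2) * p ^ i) ≠ -(π ^ ((p ^ k + 1) / 2))) :
    (minpoly (ZMod p) (π⁻¹ ^ ((p ^ k + 1) / 2))).natDegree = m ∧
    (minpoly (ZMod p) (-(π⁻¹ ^ ((p ^ k + 1) / 2)))).natDegree = m := by
  have hp1 : 1 < p := (Fact.out (p := p.Prime)).one_lt
  have hp3 : 3 ≤ p := by
    rcases hodd with ⟨c, hc⟩; omega
  have hpm1 : 1 < p ^ m := Nat.one_lt_pow hm.ne' hp1
  set e := (p ^ k + 1) / 2 with he_def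
  have hordpos : 0 < orderOf π := by rw [hπ]; omega
  have hπ0 : π ≠ 0 := by
    intro h0
    have h1 : π ^ (p ^ m - 1) = 1 := hπ ▸ pow_orderOf_eq_one π
    rw [h0, zero_pow (by omega)] at h1
    exact zero_ne_one h1
  -- key: if (π⁻¹^e) ^ (p^d) = π⁻¹^e with 0 < d, d ∣ m, then d = m
  have main : ∀ d : ℕ, 0 < d → d ∣ m → (π⁻¹ ^ e) ^ p ^ d = π⁻¹ ^ e → d = m := by
    intro d hd0 hdvd hfix
    by_contra hdm'
    have hdm : d < m := lt_of_le_of_ne (Nat.le_of_dvd hm hdvd) hdm'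
    rw [← pow_mul, inv_pow, inv_pow] at hfix
    have hfix2 : π ^ (e * p ^ d) = π ^ e := inv_injective hfix
    have hle : e ≤ e * p ^ d := Nat.le_mul_of_pos_right e (by positivity)
    have hcancel : π ^ (e * p ^ d - e) * π ^ e = π ^ e := by
      rw [← pow_add, Nat.sub_add_cancel hle, hfix2]
    have h1 : π ^ (e * p ^ d - e) = 1 :=
      mul_right_cancel₀ (pow_ne_zero e hπ0) (by rw [one_mul]; exact hcancel)
    have hdvd2 : p ^ m - 1 ∣ e * (p ^ d - 1) := by
      have hord := orderOf_dvd_of_pow_eq_one h1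
      rw [hπ] at hord
      have heq : e * (p ^ d - 1) = e * p ^ d - e := by
        rw [Nat.mul_sub, mul_one]
      rw [heq]
      exact hord
    exact arith_aux hp3 hodd hd0 hdm hdvd hdvd2
  obtain ⟨hd1pos, hd1dvd, hd1fix⟩ := minpoly_aux p m hm F hcard (π⁻¹ ^ e)
  obtain ⟨hd2pos, hd2dvd, hd2fix⟩ := minpoly_aux p m hm F hcard (-(π⁻¹ ^ e))
  refine ⟨main _ hd1pos hd1dvd hd1fix, main _ hd2pos hd2dvd ?_⟩
  have hoddpow : Odd (p ^ (minpoly (ZMod p) (-(π⁻¹ ^ e))).natDegree) := hodd.pow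
  rw [hoddpow.neg_pow] at hd2fix
  exact neg_injective hd2fix
end

section
/- Assume v2(m) > v2(k) and set d = gcd(m,k) and u_p = π^{(p^m−1)/(p−1)}. Then u_p^{(p^k+1)/2} = (−1)^d · u_p in F_{p^m}. -/
theorem up_pow_eq (p m k : ℕ) [Fact p.Prime] (hodd : Odd p) (hm : 0 < m) (hk : 0 < k)
    (F : Type) [Field F] [Fintype F] [Algebra (ZMod p) F]
    (hcard : Fintype.card F = p ^ m)
    (π : F) (hπ : orderOf π = p ^ m - 1)
    (hv : padicValNat 2 k < padicValNat 2 m) :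
    (π ^ ((p ^ m - 1) / (p - 1))) ^ ((p ^ k + 1) / 2)
      = (-1 : F) ^ (Nat.gcd m k) * π ^ ((p ^ m - 1) / (p - 1)) := by
  have hp : p.Prime := Fact.out
  have hp2 : 2 ≤ p := hp.two_le
  have hpne2 : p ≠ 2 := by rintro rfl; exact absurd (Nat.odd_iff.mp hodd) (by norm_num)
  have hp3 : 3 ≤ p := by omega
  -- a with p - 1 = 2 * a
  obtain ⟨a, ha⟩ : ∃ a, p - 1 = 2 * a := by
    obtain ⟨t, ht⟩ := hodd; exact ⟨t, by omega⟩
  have ha1 : 1 ≤ a := by omega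
  -- geometric sum facts
  have hgeom : ∀ n, (p - 1) * (∑ i ∈ Finset.range n, p ^ i) = p ^ n - 1 := by
    intro n
    induction n with
    | zero => simp
    | succ n ih =>
      rw [Finset.sum_range_succ, Nat.mul_add, ih, pow_succ, Nat.sub_mul, one_mul]
      have h1 : 1 ≤ p ^ n := Nat.one_le_pow _ _ hp.pos
      have h2 : p ^ n ≤ p ^ n * p := Nat.le_mul_of_pos_right _ hp.pos
      have h3 : (p - 1) * p ^ n = p * p ^ n - p ^ n := by rw [Nat.sub_mul, one_mul]
      rw [mul_comm p (p ^ n)] at *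
      omega
  have hpar : ∀ n, (∑ i ∈ Finset.range n, p ^ i) % 2 = n % 2 := by
    intro n
    induction n with
    | zero => simp
    | succ n ih =>
      rw [Finset.sum_range_succ]
      have : p ^ n % 2 = 1 := Nat.odd_iff.mp (hodd.pow)
      omega
  set T := ∑ i ∈ Finset.range m, p ^ i with hTdef
  set S := ∑ i ∈ Finset.range k, p ^ i with hSdef
  have hT : (p - 1) * T = p ^ m - 1 := hgeom m
  have hS : (p - 1) * S = p ^ k - 1 := hgeom k
  have hpm2 : 2 ≤ p ^ m := le_trans hp2 (Nat.le_self_pow hm.ne' p)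
  have hT1 : 1 ≤ T := by
    rcases Nat.eq_zero_or_pos T with h | h
    · rw [h, Nat.mul_zero] at hT; omega
    · exact h
  have hpk1 : 1 ≤ p ^ k := Nat.one_le_pow _ _ hp.pos
  have hdivT : (p ^ m - 1) / (p - 1) = T := by
    rw [← hT, Nat.mul_div_cancel_left _ (by omega : 0 < p - 1)]
  have hhalf : (p ^ k + 1) / 2 = a * S + 1 := by
    have : p ^ k + 1 = 2 * (a * S + 1) := by
      have : p ^ k - 1 = 2 * (a * S) := by rw [← hS, ha]; ring
      omega
    rw [this, Nat.mul_div_cancel_left _ (by norm_num)]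
  rw [hdivT, hhalf]
  -- the order of π
  have hord : orderOf π = 2 * (a * T) := by rw [hπ, ← hT, ha]; ring
  -- π ^ (a * T) = -1
  have hneg : π ^ (a * T) = -1 := by
    have hsq : π ^ (a * T) * π ^ (a * T) = 1 := by
      rw [← pow_add, ← two_mul, ← hord, pow_orderOf_eq_one]
    rcases mul_self_eq_one_iff.mp hsq with h1 | h1
    · exfalso
      have hdvd : orderOf π ∣ a * T := orderOf_dvd_of_pow_eq_one h1
      rw [hord] at hdvd
      have := Nat.le_of_dvd (by positivity) hdvd
      nlinarith
    · exact h1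
  -- main computation
  have key : (π ^ T) ^ (a * S + 1) = (-1 : F) ^ S * π ^ T := by
    rw [pow_add, pow_one, ← pow_mul, show T * (a * S) = (a * T) * S by ring,
      pow_mul, hneg]
  rw [key]
  -- parity: (-1)^S = (-1)^(gcd m k)
  congr 1
  have hm2 : 2 ∣ m := by
    have h1 : 1 ≤ padicValNat 2 m := by omega
    have h2 : (2 : ℕ) ^ padicValNat 2 m ∣ m := pow_padicValNat_dvd
    exact dvd_trans (dvd_pow_self 2 (by omega)) h2
  have hSk : S % 2 = k % 2 := hpar k
  rcases Nat.even_or_odd k with hke | hko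
  · have hk2 : 2 ∣ k := hke.two_dvd
    have hg2 : 2 ∣ Nat.gcd m k := Nat.dvd_gcd hm2 hk2
    have hSe : Even S := by rw [Nat.even_iff] at *; omega
    have hge : Even (Nat.gcd m k) := by rw [Nat.even_iff]; omega
    rw [hSe.neg_one_pow, hge.neg_one_pow]
  · have hgk : Nat.gcd m k ∣ k := Nat.gcd_dvd_right m k
    have hgo : Odd (Nat.gcd m k) := by
      rcases Nat.even_or_odd (Nat.gcd m k) with hge | hgo
      · exfalso
        have h2k : 2 ∣ k := hge.two_dvd.trans hgk
        rw [Nat.odd_iff] at hko; omega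
      · exact hgo
    have hSo : Odd S := by rw [Nat.odd_iff] at *; omega
    rw [hSo.neg_one_pow, hgo.neg_one_pow]
end

section
/- Assume v2(m) > v2(k) and set d = gcd(m,k). Then 2(p^d+1) divides p^m−1 and (π^{(p^m−1)/(2(p^d+1))})^{p^k+1} = −1 in F_{p^m}. -/
theorem pi_pow_eq_neg_one (p m k : ℕ) [Fact p.Prime] (hodd : Odd p) (hm : 0 < m) (hk : 0 < k)
    (F : Type) [Field F] [Fintype F] [Algebra (ZMod p) F]
    (hcard : Fintype.card F = p ^ m)
    (π : F) (hπ : orderOf π = p ^ m - 1)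
    (hv : padicValNat 2 k < padicValNat 2 m) :
    (2 * (p ^ Nat.gcd m k + 1) ∣ p ^ m - 1) ∧
    (π ^ ((p ^ m - 1) / (2 * (p ^ Nat.gcd m k + 1)))) ^ (p ^ k + 1) = (-1 : F) := by
  have hp : p.Prime := Fact.out
  have hp3 : 3 ≤ p := by
    have := hp.two_le
    rcases hodd with ⟨j, hj⟩
    omega
  set d := Nat.gcd m k with hd
  set b := padicValNat 2 k with hb
  have hdm : d ∣ m := Nat.gcd_dvd_left m k
  have hdk : d ∣ k := Nat.gcd_dvd_right m k
  have hdpos : 0 < d := Nat.gcd_pos_of_pos_left k hm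
  have h2k : ¬ (2 ^ (b + 1) ∣ k) := pow_succ_padicValNat_not_dvd hk.ne'
  have hm2 : 2 ^ (b + 1) ∣ m :=
    dvd_trans (pow_dvd_pow 2 (by omega)) pow_padicValNat_dvd
  have hbd : 2 ^ b ∣ d :=
    Nat.dvd_gcd (dvd_trans (pow_dvd_pow 2 (Nat.le_succ b)) hm2) pow_padicValNat_dvd
  -- k/d is odd
  have hkd_odd : Odd (k / d) := by
    rw [← Nat.not_even_iff_odd]
    intro he
    apply h2k
    have h2 : (2 : ℕ) ∣ k / d := he.two_dvd
    calc 2 ^ (b + 1) = 2 ^ b * 2 := by ring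
    _ ∣ d * (k / d) := mul_dvd_mul hbd h2
    _ = k := Nat.mul_div_cancel' hdk
  -- m/d is even
  have hmd_even : Even (m / d) := by
    by_contra he
    rw [Nat.not_even_iff_odd] at he
    apply h2k
    have hcop : Nat.Coprime (2 ^ (b + 1)) (m / d) :=
      Nat.Coprime.pow_left _ (Nat.coprime_two_left.mpr he)
    have hmd : 2 ^ (b + 1) ∣ d * (m / d) := by
      rw [Nat.mul_div_cancel' hdm]; exact hm2
    exact dvd_trans (hcop.dvd_of_dvd_mul_right hmd) hdk
  set q := p ^ d with hq
  set N := p ^ m - 1 with hN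
  have hq1 : 1 ≤ q := Nat.one_le_pow _ _ hp.pos
  have hq_odd : Odd q := hodd.pow
  -- divisibility: 2*(q+1) ∣ N
  have hdvdN : 2 * (q + 1) ∣ N := by
    obtain ⟨u, hu⟩ := hmd_even
    have hmu : m = 2 * d * u := by
      have := Nat.mul_div_cancel' hdm
      rw [← this, hu]; ring
    have step1 : p ^ (2 * d) - 1 ∣ N := by
      have := Nat.sub_dvd_pow_sub_pow (p ^ (2 * d)) 1 u
      rwa [one_pow, ← pow_mul, ← hmu] at this
    have step2 : 2 * (q + 1) ∣ p ^ (2 * d) - 1 := by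
      obtain ⟨r, hr⟩ : ∃ r, q = r + 1 := ⟨q - 1, by omega⟩
      have key : p ^ (2 * d) - 1 = (q + 1) * (q - 1) := by
        have h1 : p ^ (2 * d) = q * q := by rw [hq, ← pow_add]; ring_nf
        rw [h1, hr]
        simp only [Nat.add_sub_cancel]
        have : (r + 1) * (r + 1) = (r + 1 + 1) * r + 1 := by ring
        omega
      rw [key]
      have h2 : (2 : ℕ) ∣ q - 1 := by
        obtain ⟨j, hj⟩ := hq_odd
        exact ⟨j, by omega⟩
      calc 2 * (q + 1) = (q + 1) * 2 := by ring
      _ ∣ (q + 1) * (q - 1) := mul_dvd_mul_left _ h2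
    exact dvd_trans step2 step1
  refine ⟨hdvdN, ?_⟩
  -- q + 1 divides p^k + 1 with odd quotient
  set t := k / d with ht
  have htk : k = d * t := (Nat.mul_div_cancel' hdk).symm
  set c : ℤ := ∑ i ∈ Finset.range t, ((p : ℤ) ^ d) ^ i * (-1 : ℤ) ^ (t - 1 - i) with hc
  have hgeom : ((p : ℤ)) ^ k + 1 = ((p : ℤ) ^ d + 1) * c := by
    have := geom_sum₂_mul ((p : ℤ) ^ d) (-1 : ℤ) t
    rw [hkd_odd.neg_one_pow, sub_neg_eq_add, sub_neg_eq_add, ← pow_mul, ← htk] at this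
    rw [← this]; ring
  have hp2 : ((p : ZMod 2)) = 1 := by
    have h1 : p % 2 = 1 := Nat.odd_iff.mp hodd
    calc (p : ZMod 2) = ((p % 2 : ℕ) : ZMod 2) := (ZMod.natCast_mod p 2).symm
    _ = 1 := by rw [h1]; norm_num
  have hqz : ((q : ℕ) : ℤ) = (p : ℤ) ^ d + 0 := by rw [hq]; push_cast; ring
  have hc_odd : Odd c := by
    rcases Int.even_or_odd c with he | ho
    swap
    · exact ho
    exfalso
    obtain ⟨r, hr⟩ := he
    have h2c : (2 : ℤ) ∣ c := ⟨r, by omega⟩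
    have hcast : ((c : ℤ) : ZMod 2) = 0 :=
      (ZMod.intCast_zmod_eq_zero_iff_dvd c 2).mpr h2c
    rw [hc] at hcast
    push_cast at hcast
    rw [hp2] at hcast
    simp only [one_pow, show (-1 : ZMod 2) = 1 from by decide, mul_one,
      Finset.sum_const, Finset.card_range, nsmul_eq_mul] at hcast
    have h2t : (2 : ℕ) ∣ t := (ZMod.natCast_eq_zero_iff t 2).mp (by
      simpa using hcast)
    obtain ⟨j, hj⟩ := hkd_odd
    omega
  -- transfer to ℕ
  have hdvdk : q + 1 ∣ p ^ k + 1 := by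
    have : ((q + 1 : ℕ) : ℤ) ∣ ((p ^ k + 1 : ℕ) : ℤ) := by
      push_cast
      refine ⟨c, ?_⟩
      rw [hgeom]
      rw [hq]
      push_cast
      ring
    exact_mod_cast this
  set cn := (p ^ k + 1) / (q + 1) with hcn
  have hcneq : p ^ k + 1 = (q + 1) * cn := (Nat.mul_div_cancel' hdvdk).symm
  have hcn_c : (cn : ℤ) = c := by
    have h0 := congrArg (Nat.cast : ℕ → ℤ) hcneq
    push_cast at h0
    have h1 : ((q : ℤ) + 1) * (cn : ℤ) = ((q : ℤ) + 1) * c := by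
      rw [← h0, hgeom, hqz]
      ring
    have hqpos : ((q : ℤ) + 1) ≠ 0 := by positivity
    exact mul_left_cancel₀ hqpos h1
  have hcn_odd : Odd cn := by
    rw [← Int.odd_coe_nat, hcn_c]; exact hc_odd
  -- now the group theory
  have hNpos : 2 ≤ N := by
    have hpm : p ≤ p ^ m := Nat.le_self_pow hm.ne' p
    omega
  set M := N / (2 * (q + 1)) with hM
  have hNM : N = 2 * (q + 1) * M := (Nat.mul_div_cancel' hdvdN).symm
  have hMpos : 0 < M := by
    rcases Nat.eq_zero_or_pos M with h | h
    · rw [h, mul_zero] at hNM; omega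
    · exact h
  have hπN : π ^ N = 1 := by rw [← hπ]; exact pow_orderOf_eq_one π
  have hhalf : π ^ ((q + 1) * M) = -1 := by
    have hx2 : π ^ ((q + 1) * M) * π ^ ((q + 1) * M) = 1 := by
      rw [← pow_add, show (q + 1) * M + (q + 1) * M = N from by rw [hNM]; ring, hπN]
    have hx1 : π ^ ((q + 1) * M) ≠ 1 := by
      intro h
      have hdvd : orderOf π ∣ (q + 1) * M := orderOf_dvd_of_pow_eq_one h
      rw [hπ] at hdvd
      have hle : N ≤ (q + 1) * M := Nat.le_of_dvd (by positivity) hdvd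
      have h2 : N = 2 * ((q + 1) * M) := by rw [hNM]; ring
      have hApos : 0 < (q + 1) * M := by positivity
      have hApos' : (0 : ℤ) < ((q + 1) * M : ℕ) := by exact_mod_cast hApos
      have hle' : ((N : ℕ) : ℤ) ≤ (((q + 1) * M : ℕ) : ℤ) := by exact_mod_cast hle
      have h2' : ((N : ℕ) : ℤ) = 2 * (((q + 1) * M : ℕ) : ℤ) := by exact_mod_cast h2
      linarith
    rcases mul_self_eq_one_iff.mp hx2 with h | h
    · exact absurd h hx1
    · exact h
  obtain ⟨c', hc'⟩ := hcn_odd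
  rw [← pow_mul]
  have hexp : M * (p ^ k + 1) = N * c' + (q + 1) * M := by
    rw [hcneq, hc', hNM]; ring
  rw [hexp, pow_add, pow_mul, hπN, one_pow, one_mul, hhalf]
end

section
/- Assume v2(m) > v2(k). Then for every α ∈ F_{p^m}, Σ_{x∈F_{p^m}} ζ_p^{Tr(α x^{p^k+1})} = Σ_{x∈F_{p^m}} ζ_p^{Tr(−α x^{p^k+1})}. -/
open Finset

theorem sum_eq_sum_neg (p m k : ℕ) [Fact p.Prime] (hodd : Odd p) (hm : 0 < m) (hk : 0 < k)
    (F : Type) [Field F] [Fintype F] [Algebra (ZMod p) F]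
    (hcard : Fintype.card F = p ^ m)
    (ζ : ℂ) (hζ : IsPrimitiveRoot ζ p)
    (hv : padicValNat 2 k < padicValNat 2 m) :
    ∀ α : F,
      ∑ x : F, ζ ^ ((Algebra.trace (ZMod p) F (α * x ^ (p ^ k + 1))).val)
        = ∑ x : F, ζ ^ ((Algebra.trace (ZMod p) F (-α * x ^ (p ^ k + 1))).val) := by
  classical
  have hp : p.Prime := Fact.out
  have hp2 : (2 : ℕ).Prime := Nat.prime_two
  set d := Nat.gcd m k with hddef
  have hm0 : m ≠ 0 := hm.ne'
  have hk0 : k ≠ 0 := hk.ne'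
  have hdm : d ∣ m := Nat.gcd_dvd_left m k
  have hdk : d ∣ k := Nat.gcd_dvd_right m k
  have hd0 : d ≠ 0 := (Nat.gcd_pos_of_pos_left k hm).ne'
  -- translate padicValNat to factorization
  have hvm : k.factorization 2 < m.factorization 2 := by
    rw [Nat.factorization_def k hp2, Nat.factorization_def m hp2]; exact hv
  -- v2(d) = v2(k)
  have hfd : d.factorization 2 = k.factorization 2 := by
    apply le_antisymm
    · exact (Nat.factorization_le_iff_dvd hd0 hk0).mpr hdk 2
    · rw [← hp2.pow_dvd_iff_le_factorization hd0]
      apply Nat.dvd_gcd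
      · rw [hp2.pow_dvd_iff_le_factorization hm0]
        exact hvm.le
      · exact Nat.ordProj_dvd k 2
  -- k/d is odd
  have hkd0 : k / d ≠ 0 := by
    intro h
    exact hk0 (by rw [← Nat.div_mul_cancel hdk, h, zero_mul])
  have hkd_odd : Odd (k / d) := by
    have hnd : ¬ (2 : ℕ) ∣ k / d := by
      rw [hp2.dvd_iff_one_le_factorization hkd0, Nat.factorization_div hdk]
      simp only [Finsupp.tsub_apply]
      omega
    rw [Nat.odd_iff]
    omega
  -- 2*d ∣ m
  have h2dm : 2 * d ∣ m := by
    have hmd0 : m / d ≠ 0 := by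
      intro h
      exact hm0 (by rw [← Nat.div_mul_cancel hdm, h, zero_mul])
    have : (2 : ℕ) ∣ m / d := by
      rw [hp2.dvd_iff_one_le_factorization hmd0, Nat.factorization_div hdm]
      simp only [Finsupp.tsub_apply]
      omega
    obtain ⟨j, hj⟩ := this
    exact ⟨j, by rw [← Nat.div_mul_cancel hdm, hj]; ring⟩
  -- write k = 2*d*j + d
  obtain ⟨j, hj⟩ := hkd_odd
  have hkdj : k = 2 * d * j + d := by
    have h := Nat.mul_div_cancel' hdk
    rw [hj] at h
    rw [← h]; ring
  -- numeric divisibility : 2*(p^d+1) ∣ p^m - 1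
  have hp1 : 1 ≤ p ^ d := Nat.one_le_pow _ _ hp.pos
  have hfact : (p ^ d - 1) * (p ^ d + 1) = p ^ (2 * d) - 1 := by
    have h2 : p ^ (2 * d) = p ^ d * p ^ d := by rw [two_mul, pow_add]
    obtain ⟨r, hr⟩ : ∃ r, p ^ d = r + 1 := ⟨p ^ d - 1, by omega⟩
    rw [h2, hr]
    have h3 : (r + 1) * (r + 1) = r * (r + 1 + 1) + 1 := by ring
    rw [h3]
    simp
  have h2pd : 2 ∣ p ^ d - 1 := by
    have hoddpd : Odd (p ^ d) := hodd.pow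
    obtain ⟨r, hr⟩ := hoddpd
    omega
  have hNdvd : 2 * (p ^ d + 1) ∣ p ^ m - 1 := by
    have h1 : 2 * (p ^ d + 1) ∣ p ^ (2 * d) - 1 := by
      rw [← hfact]
      exact mul_dvd_mul h2pd dvd_rfl
    refine h1.trans ?_
    obtain ⟨t, ht⟩ := h2dm
    have h2 := Nat.sub_dvd_pow_sub_pow (p ^ (2 * d)) 1 t
    rwa [one_pow, ← pow_mul, ← ht] at h2
  set N := p ^ m - 1 with hN
  have h3p : 3 ≤ p := by
    obtain ⟨r, hr⟩ := hodd
    have := hp.two_le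
    omega
  have hpN : 3 ≤ p ^ m := le_trans h3p (Nat.le_self_pow hm0 p)
  have hN2 : 2 ≤ N := by omega
  -- find c with c ^ (p^d+1) = -1
  obtain ⟨g, hg⟩ := IsCyclic.exists_generator (α := Fˣ)
  have hordg : orderOf g = N := by
    rw [orderOf_eq_card_of_forall_mem_zpowers hg, Nat.card_eq_fintype_card,
      Fintype.card_units, hcard]
  obtain ⟨q, hq⟩ := hNdvd
  have hNhalf : N / 2 = (p ^ d + 1) * q := by
    rw [hq, mul_assoc]
    exact Nat.mul_div_cancel_left _ two_pos
  have hNeven : (2 : ℕ) ∣ N := ⟨(p ^ d + 1) * q, by rw [hq]; ring⟩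
  have hc : ∃ c : F, c ^ (p ^ d + 1) = -1 := by
    refine ⟨((g : Fˣ) : F) ^ q, ?_⟩
    have hpow : (((g : Fˣ) : F) ^ q) ^ (p ^ d + 1) = ((g ^ (N / 2) : Fˣ) : F) := by
      rw [← pow_mul, Units.val_pow_eq_pow_val]
      congr 1
      rw [hNhalf]; ring
    rw [hpow]
    have hsq : ((g ^ (N / 2) : Fˣ) : F) ^ 2 = 1 := by
      rw [← Units.val_pow_eq_pow_val, ← pow_mul, Nat.div_mul_cancel hNeven, ← hordg,
        pow_orderOf_eq_one, Units.val_one]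
    have hne : ((g ^ (N / 2) : Fˣ) : F) ≠ 1 := by
      intro h
      have h1 : (g ^ (N / 2) : Fˣ) = 1 := Units.ext (by simpa using h)
      have hdvd := orderOf_dvd_of_pow_eq_one h1
      rw [hordg] at hdvd
      have := Nat.le_of_dvd (by omega) hdvd
      omega
    have hor := mul_self_eq_one_iff.mp
      (show ((g ^ (N / 2) : Fˣ) : F) * ((g ^ (N / 2) : Fˣ) : F) = 1 by rw [← sq]; exact hsq)
    tauto
  obtain ⟨c, hcd⟩ := hc
  have hc0 : c ≠ 0 := by
    intro h
    rw [h, zero_pow (by omega)] at hcd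
    simp at hcd
  -- Frobenius periodicity
  have h1 : c ^ p ^ d * c = -1 := by rw [← pow_succ]; exact hcd
  have hfrob : c ^ p ^ (2 * d) = c := by
    have h2 : (c ^ p ^ d * c) ^ p ^ d = (-1 : F) ^ p ^ d := by rw [h1]
    rw [Odd.neg_one_pow hodd.pow, mul_pow, ← pow_mul, ← pow_add] at h2
    have hexp : p ^ d * p ^ d = p ^ (2 * d) := by rw [← pow_add, two_mul]
    rw [hexp] at h2
    have h3 : c ^ p ^ (2 * d) * c ^ p ^ d = c ^ p ^ d * c := by rw [← pow_add, h2, h1]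
    rw [mul_comm] at h3
    exact mul_left_cancel₀ (pow_ne_zero (p ^ d) hc0) h3
  have hiter : ∀ i : ℕ, c ^ p ^ (2 * d * i) = c := by
    intro i
    induction i with
    | zero => simp
    | succ n ih =>
      have h4 : 2 * d * (n + 1) = 2 * d * n + 2 * d := by ring
      rw [h4, pow_add, pow_mul, ih, hfrob]
  have hck : c ^ (p ^ k + 1) = -1 := by
    have hpk : c ^ p ^ k = c ^ p ^ d := by
      rw [hkdj, pow_add, pow_mul, hiter j]
    rw [pow_succ, hpk, ← pow_succ]
    exact hcd
  -- conclude via the bijection x ↦ c * x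
  intro α
  refine Fintype.sum_bijective (fun x => c * x) (mulLeft_bijective₀ c hc0) _ _ ?_
  intro x
  have harg : -α * (c * x) ^ (p ^ k + 1) = α * x ^ (p ^ k + 1) := by
    rw [mul_pow, hck]; ring
  rw [harg]
end

section
/- Assume v2(m) > v2(k). Then for every α ∈ F_{p^m}, R_α = (p−1) · Σ_{x∈F_{p^m}} ζ_p^{Tr(α x^{p^k+1})}. -/
open Finset

-- Number theory: gcd(p^k+1, p^m-1) * (p-1) ∣ p^m - 1
lemma key_dvd (p m k : ℕ) (hp : 2 ≤ p) (hm : 0 < m) (hk : 0 < k)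
    (hv : padicValNat 2 k < padicValNat 2 m) :
    Nat.gcd (p ^ k + 1) (p ^ m - 1) * (p - 1) ∣ p ^ m - 1 := by
  set v := padicValNat 2 k with hvdef
  set g := Nat.gcd k m with hgdef
  have hg0 : 0 < g := Nat.gcd_pos_of_pos_left m hk
  have hgk : g ∣ k := Nat.gcd_dvd_left k m
  have hgm : g ∣ m := Nat.gcd_dvd_right k m
  -- 2-adic facts
  have h2k : (2:ℕ) ^ v ∣ k := pow_padicValNat_dvd
  have h2k' : ¬ (2:ℕ) ^ (v+1) ∣ k := pow_succ_padicValNat_not_dvd hk.ne'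
  have h2m : (2:ℕ) ^ (v+1) ∣ m := by
    calc (2:ℕ)^(v+1) ∣ 2 ^ padicValNat 2 m := pow_dvd_pow 2 hv
    _ ∣ m := pow_padicValNat_dvd
  have h2g : (2:ℕ) ^ v ∣ g := Nat.dvd_gcd h2k ((pow_dvd_pow 2 hv.le).trans pow_padicValNat_dvd)
  -- padicValNat 2 g = v
  have hvg : padicValNat 2 g = v := by
    have h1 : v ≤ padicValNat 2 g := by
      have := (padicValNat_dvd_iff (p := 2) v g).mp h2g
      rcases this with h | h
      · omega
      · exact h
    have h2 : ¬ (v + 1 ≤ padicValNat 2 g) := by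
      intro hle
      exact h2k' (((pow_dvd_pow 2 hle).trans pow_padicValNat_dvd).trans hgk)
    omega
  set o := g / 2 ^ v with hodef
  have hgo : g = 2 ^ v * o := by
    rw [hodef]; exact (Nat.mul_div_cancel' h2g).symm
  have ho_odd : ¬ (2 ∣ o) := by
    intro h2o
    apply h2k'
    refine dvd_trans ?_ hgk
    rw [hgo, pow_succ]
    exact mul_dvd_mul_left _ h2o
  have ho0 : 0 < o := by
    rcases Nat.eq_zero_or_pos o with h | h
    · rw [h, mul_zero] at hgo; omega
    · exact h
  -- 2g ∣ m
  have h2gm : 2 * g ∣ m := by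
    have hco : Nat.Coprime (2 ^ (v+1)) o :=
      Nat.Coprime.pow_left _ ((Nat.prime_two.coprime_iff_not_dvd).mpr ho_odd)
    have hogdvd : o ∣ g := ⟨2 ^ v, by rw [hgo]; ring⟩
    have : 2 ^ (v+1) * o ∣ m := hco.mul_dvd_of_dvd_of_dvd h2m (hogdvd.trans hgm)
    calc 2 * g = 2 ^ (v+1) * o := by rw [hgo, pow_succ]; ring
    _ ∣ m := this
  -- k / g is odd
  have hkg_odd : Odd (k / g) := by
    rw [Nat.odd_iff]
    by_contra h
    have h2 : 2 ∣ k / g := by omega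
    have : 2 * g ∣ k := by
      obtain ⟨t, ht⟩ := h2
      obtain ⟨s, hs⟩ := hgk
      rw [hs]
      rw [hs, Nat.mul_div_cancel_left _ hg0] at ht
      exact ⟨t, by rw [ht]; ring⟩
    apply h2k'
    refine dvd_trans ?_ this
    rw [pow_succ, hgo]
    exact ⟨o, by ring⟩
  -- set D
  set D := Nat.gcd (p ^ k + 1) (p ^ m - 1) with hDdef
  have hDk : D ∣ p ^ k + 1 := Nat.gcd_dvd_left _ _
  have hDm : D ∣ p ^ m - 1 := Nat.gcd_dvd_right _ _
  have hpm1 : 1 ≤ p ^ m := Nat.one_le_pow _ _ (by omega)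
  have hpk1 : 1 ≤ p ^ k := Nat.one_le_pow _ _ (by omega)
  -- work in ZMod D
  have hDk' : ((p : ZMod D)) ^ k = -1 := by
    have : ((p ^ k + 1 : ℕ) : ZMod D) = 0 := (ZMod.natCast_eq_zero_iff _ _).mpr hDk
    push_cast at this
    linear_combination this
  have hDm' : ((p : ZMod D)) ^ m = 1 := by
    have : ((p ^ m - 1 : ℕ) : ZMod D) = 0 := (ZMod.natCast_eq_zero_iff _ _).mpr hDm
    rw [Nat.cast_sub hpm1] at this
    push_cast at this
    linear_combination this
  have hD2k : ((p : ZMod D)) ^ (2 * k) = 1 := by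
    rw [mul_comm, pow_mul, hDk']; ring
  have hgcd1 : ((p : ZMod D)) ^ Nat.gcd (2*k) m = 1 := pow_gcd_eq_one.mpr ⟨hD2k, hDm'⟩
  have hgcd_dvd : Nat.gcd (2*k) m ∣ 2 * g := by
    have : Nat.gcd (2*k) m ∣ Nat.gcd (2*k) (2*m) := Nat.dvd_gcd (Nat.gcd_dvd_left _ _) ((Nat.gcd_dvd_right _ _).trans (dvd_mul_left m 2))
    rwa [Nat.gcd_mul_left] at this
  have hD2g : ((p : ZMod D)) ^ (2 * g) = 1 := by
    obtain ⟨t, ht⟩ := hgcd_dvd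
    rw [ht, pow_mul, hgcd1, one_pow]
  -- p^k = p^g in ZMod D
  have hkg : k = g * (k / g) := (Nat.mul_div_cancel' hgk).symm
  obtain ⟨e, he⟩ := hkg_odd
  have hDg : ((p : ZMod D)) ^ g = -1 := by
    have : ((p : ZMod D)) ^ k = ((p : ZMod D)) ^ g := by
      conv_lhs => rw [hkg, he]
      rw [show g * (2 * e + 1) = 2 * g * e + g by ring, pow_add, pow_mul, hD2g, one_pow, one_mul]
    rw [← this, hDk']
  have hDdvd : D ∣ p ^ g + 1 := by
    have : ((p ^ g + 1 : ℕ) : ZMod D) = 0 := by push_cast [hDg]; ring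
    exact (ZMod.natCast_eq_zero_iff _ _).mp this
  -- final: (p-1)*(p^g+1) ∣ p^m - 1
  have hfin : (p ^ g + 1) * (p - 1) ∣ p ^ m - 1 := by
    have h1 : (p - 1) ∣ p ^ g - 1 := by
      simpa using Nat.sub_dvd_pow_sub_pow p 1 g
    have h2 : (p ^ g + 1) * (p ^ g - 1) = p ^ (2*g) - 1 := by
      have hpg1 : 1 ≤ p ^ g := Nat.one_le_pow _ _ (by omega)
      have : p ^ (2*g) = p ^ g * p ^ g := by rw [two_mul, pow_add]
      rw [this]
      obtain ⟨t, ht⟩ : ∃ t, p ^ g = t + 1 := ⟨p ^ g - 1, by omega⟩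
      rw [ht, Nat.add_sub_cancel]
      have e1 : (t + 1 + 1) * t = t * t + 2 * t := by ring
      have e2 : (t + 1) * (t + 1) = t * t + 2 * t + 1 := by ring
      omega
    have h3 : p ^ (2*g) - 1 ∣ p ^ m - 1 := by
      obtain ⟨t, ht⟩ := h2gm
      have h4 := Nat.sub_dvd_pow_sub_pow (p ^ (2*g)) 1 t
      rw [one_pow] at h4
      conv_rhs => rw [ht, pow_mul]
      exact h4
    calc (p ^ g + 1) * (p - 1) ∣ (p ^ g + 1) * (p ^ g - 1) := mul_dvd_mul_left _ h1
    _ = p ^ (2*g) - 1 := h2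
    _ ∣ p ^ m - 1 := h3
  exact dvd_trans (mul_dvd_mul_right hDdvd _) hfin

lemma exists_pow_root (p m k : ℕ) [Fact p.Prime] (hm : 0 < m) (hk : 0 < k)
    (F : Type) [Field F] [Fintype F] (hcard : Fintype.card F = p ^ m)
    (hv : padicValNat 2 k < padicValNat 2 m)
    (u : F) (hu0 : u ≠ 0) (hu : u ^ (p - 1) = 1) :
    ∃ c : F, c ≠ 0 ∧ c ^ (p ^ k + 1) = u := by
  have hp2 : 2 ≤ p := (Fact.out : p.Prime).two_le
  letI := Classical.decEq F
  have hq : Fintype.card Fˣ = p ^ m - 1 := by rw [Fintype.card_units, hcard]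
  obtain ⟨g, hg⟩ := IsCyclic.exists_generator (α := Fˣ)
  have hord : orderOf g = p ^ m - 1 := by
    rw [orderOf_eq_card_of_forall_mem_zpowers hg, Nat.card_eq_fintype_card, hq]
  set U : Fˣ := Units.mk0 u hu0 with hU
  obtain ⟨n, hn⟩ := Subgroup.mem_zpowers_iff.mp (hg U)
  have hU1 : U ^ (p - 1) = 1 := by
    ext
    rw [Units.val_pow_eq_pow_val]
    simpa [hU] using hu
  set D := Nat.gcd (p ^ k + 1) (p ^ m - 1) with hD
  have hkey := key_dvd p m k hp2 hm hk hv
  -- order divides n * (p-1)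
  have hdvd1 : ((p ^ m - 1 : ℕ) : ℤ) ∣ n * ((p - 1 : ℕ) : ℤ) := by
    rw [← hord]
    rw [orderOf_dvd_iff_zpow_eq_one]
    rw [zpow_mul, hn, zpow_natCast, hU1]
  have hdvd2 : (D : ℤ) * ((p - 1 : ℕ) : ℤ) ∣ n * ((p - 1 : ℕ) : ℤ) := by
    refine dvd_trans ?_ hdvd1
    have := Int.natCast_dvd_natCast.mpr hkey
    push_cast at this ⊢
    convert this using 2
  have hp1ne : ((p - 1 : ℕ) : ℤ) ≠ 0 := by
    have : 1 ≤ p - 1 := by omega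
    exact_mod_cast Nat.one_le_iff_ne_zero.mp this
  have hDn : (D : ℤ) ∣ n := by
    have := (mul_dvd_mul_iff_right hp1ne).mp hdvd2
    exact this
  obtain ⟨a, ha⟩ := hDn
  -- Bezout
  set A := Int.gcdA ((p ^ k + 1 : ℕ) : ℤ) ((p ^ m - 1 : ℕ) : ℤ) with hA
  set B := Int.gcdB ((p ^ k + 1 : ℕ) : ℤ) ((p ^ m - 1 : ℕ) : ℤ) with hB
  have hbez : (D : ℤ) = ((p ^ k + 1 : ℕ) : ℤ) * A + ((p ^ m - 1 : ℕ) : ℤ) * B := by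
    have := Int.gcd_eq_gcd_ab ((p ^ k + 1 : ℕ) : ℤ) ((p ^ m - 1 : ℕ) : ℤ)
    rwa [Int.gcd_natCast_natCast] at this
  have hgb : g ^ (((p ^ m - 1 : ℕ)) : ℤ) = 1 := by
    rw [zpow_natCast, ← hord, pow_orderOf_eq_one]
  set c' : Fˣ := g ^ (A * a) with hc'
  have hcpow : c' ^ (p ^ k + 1) = U := by
    have h1 : c' ^ (p ^ k + 1) = g ^ ((A * a) * ((p ^ k + 1 : ℕ) : ℤ)) := by
      rw [hc', ← zpow_natCast (g ^ (A * a)), ← zpow_mul]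
    rw [h1]
    have h2 : g ^ ((A * a) * ((p ^ k + 1 : ℕ) : ℤ)) =
        g ^ ((A * a) * ((p ^ k + 1 : ℕ) : ℤ)) * (g ^ (((p ^ m - 1 : ℕ)) : ℤ)) ^ (B * a) := by
      rw [hgb, one_zpow, mul_one]
    rw [h2, ← zpow_mul, ← zpow_add]
    rw [show (A * a) * ((p ^ k + 1 : ℕ) : ℤ) + ((p ^ m - 1 : ℕ) : ℤ) * (B * a)
        = (((p ^ k + 1 : ℕ) : ℤ) * A + ((p ^ m - 1 : ℕ) : ℤ) * B) * a by ring]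
    rw [← hbez, ← ha, hn]
  refine ⟨(c' : F), Units.ne_zero c', ?_⟩
  rw [← Units.val_pow_eq_pow_val, hcpow]
  rfl

theorem R_alpha_eq (p m k : ℕ) [Fact p.Prime] (hodd : Odd p) (hm : 0 < m) (hk : 0 < k)
    (F : Type) [Field F] [Fintype F] [Algebra (ZMod p) F]
    (hcard : Fintype.card F = p ^ m)
    (ζ : ℂ) (hζ : IsPrimitiveRoot ζ p)
    (hv : padicValNat 2 k < padicValNat 2 m) :
    ∀ α : F,
      ∑ u : (ZMod p)ˣ, ∑ x : F,
          ζ ^ (((u : ZMod p) * Algebra.trace (ZMod p) F (α * x ^ (p ^ k + 1))).val)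
        = ((p : ℂ) - 1) * ∑ x : F, ζ ^ ((Algebra.trace (ZMod p) F (α * x ^ (p ^ k + 1))).val) := by
  intro α
  have hp2 : 2 ≤ p := (Fact.out : p.Prime).two_le
  have key : ∀ u : (ZMod p)ˣ,
      (∑ x : F, ζ ^ (((u : ZMod p) * Algebra.trace (ZMod p) F (α * x ^ (p ^ k + 1))).val))
        = ∑ x : F, ζ ^ ((Algebra.trace (ZMod p) F (α * x ^ (p ^ k + 1))).val) := by
    intro u
    have hune : (u : ZMod p) ≠ 0 := u.ne_zero
    have hw0 : (algebraMap (ZMod p) F) (u : ZMod p) ≠ 0 := by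
      intro h
      apply hune
      apply (algebraMap (ZMod p) F).injective
      rw [h, map_zero]
    have hw1 : (algebraMap (ZMod p) F (u : ZMod p)) ^ (p - 1) = 1 := by
      rw [← map_pow, ZMod.pow_card_sub_one_eq_one hune, map_one]
    obtain ⟨c, hc0, hc⟩ := exists_pow_root p m k hm hk F hcard hv _ hw0 hw1
    have hterm : ∀ x : F, ((u : ZMod p) * Algebra.trace (ZMod p) F (α * x ^ (p ^ k + 1)))
        = Algebra.trace (ZMod p) F (α * (c * x) ^ (p ^ k + 1)) := by
      intro x
      have h1 : α * (c * x) ^ (p ^ k + 1) = (u : ZMod p) • (α * x ^ (p ^ k + 1)) := by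
        rw [mul_pow, hc, Algebra.smul_def]; ring
      rw [h1, map_smul, smul_eq_mul]
    calc ∑ x : F, ζ ^ (((u : ZMod p) * Algebra.trace (ZMod p) F (α * x ^ (p ^ k + 1))).val)
        = ∑ x : F, ζ ^ ((Algebra.trace (ZMod p) F (α * (c * x) ^ (p ^ k + 1))).val) :=
          Finset.sum_congr rfl (fun x _ => by rw [hterm x])
      _ = ∑ x : F, ζ ^ ((Algebra.trace (ZMod p) F (α * x ^ (p ^ k + 1))).val) :=
          Fintype.sum_equiv (Equiv.mulLeft₀ c hc0) _ _ (fun x => rfl)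
  rw [Finset.sum_congr rfl (fun u _ => key u), Finset.sum_const, Finset.card_univ, ZMod.card_units_eq_totient]
  rw [Nat.totient_prime (Fact.out : p.Prime)]
  rw [nsmul_eq_mul, Nat.cast_sub (by omega : 1 ≤ p), Nat.cast_one]
end

section
/- Assume v2(m) ≤ v2(k) and set t = (p^k+1)/2. Then the cyclic codes C_1 and C_t have the same weight distribution: for every natural number w, the number of pairs (a,b) ∈ F_{p^m}^2 with wt(c_1(a,b)) = w equals the number of pairs (a,b) ∈ F_{p^m}^2 with wt(c_t(a,b)) = w. -/
open Finset

private lemma neg_one_pow_mod_two {R : Type*} [Monoid R] [HasDistribNeg R] (x : ℕ) :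
    (-1 : R) ^ x = (-1) ^ (x % 2) := by
  conv_lhs => rw [← Nat.div_add_mod x 2]
  rw [pow_add, pow_mul, neg_one_sq, one_pow, one_mul]

private lemma filter_card_eq_of_comp {F : Type} {n : ℕ} (σ : Fin n → Fin n)
    (hinj : Function.Injective σ) (f g : Fin n → F) (hfg : ∀ i, f i = g (σ i))
    (Q : F → Prop) [DecidablePred Q] :
    (univ.filter (fun i => Q (f i))).card = (univ.filter (fun i => Q (g i))).card := by
  apply Finset.card_equiv (Equiv.ofBijective σ (Finite.injective_iff_bijective.mp hinj))
  intro i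
  simp [hfg i]

private lemma inner_card_odd {F : Type} [Field F] {n : ℕ} (hn0 : 0 < n) (hn2 : 2 ∣ n)
    (π : F) (hπ : orderOf π = n) (t : ℕ) (htodd : t % 2 = 1) (hcop : Nat.gcd n t = 1)
    (Q : F → Prop) [DecidablePred Q] (a b : F) :
    (univ.filter (fun i : Fin n => Q (a * π ^ (t * (i : ℕ)) + b * (-(π ^ t)) ^ (i : ℕ)))).card
      = (univ.filter (fun i : Fin n => Q (a * π ^ (i : ℕ) + b * (-π) ^ (i : ℕ)))).card := by
  have hmodpow : ∀ x : ℕ, π ^ (x % n) = π ^ x := by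
    intro x
    have := pow_mod_orderOf π x
    rwa [hπ] at this
  apply filter_card_eq_of_comp (fun i => ⟨t * (i : ℕ) % n, Nat.mod_lt _ hn0⟩)
  · intro i j hij
    have h1 : t * (i : ℕ) ≡ t * (j : ℕ) [MOD n] := congrArg Fin.val hij
    have h2 := Nat.ModEq.cancel_left_of_coprime hcop h1
    have h3 : (i : ℕ) % n = (j : ℕ) % n := h2
    rw [Nat.mod_eq_of_lt i.isLt, Nat.mod_eq_of_lt j.isLt] at h3
    exact Fin.ext h3
  · intro i
    show a * π ^ (t * (i : ℕ)) + b * (-(π ^ t)) ^ (i : ℕ)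
        = a * π ^ (t * (i : ℕ) % n) + b * (-π) ^ (t * (i : ℕ) % n)
    have hpar : (t * (i : ℕ) % n) % 2 = (i : ℕ) % 2 := by
      rw [Nat.mod_mod_of_dvd _ hn2, Nat.mul_mod, htodd, one_mul, Nat.mod_mod_of_dvd _ (dvd_refl 2)]
    have E1 : (-(π ^ t)) ^ (i : ℕ) = (-1 : F) ^ ((i : ℕ) % 2) * π ^ (t * (i : ℕ)) := by
      rw [neg_pow, neg_one_pow_mod_two, ← pow_mul]
    have E2 : (-π) ^ (t * (i : ℕ) % n) = (-1 : F) ^ ((i : ℕ) % 2) * π ^ (t * (i : ℕ)) := by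
      rw [neg_pow, neg_one_pow_mod_two, hpar, hmodpow]
    rw [hmodpow, E1, E2]

private lemma inner_card_even {F : Type} [Field F] {n : ℕ} (hn0 : 0 < n) (hn2 : 2 ∣ n)
    (π : F) (hπ : orderOf π = n) (t : ℕ) (hteven : t % 2 = 0)
    (hhodd : (n / 2) % 2 = 1) (hgcd : Nat.gcd n t = 2)
    (Q : F → Prop) [DecidablePred Q] (a b : F) :
    (univ.filter (fun i : Fin n => Q (a * π ^ (t * (i : ℕ)) + b * (-(π ^ t)) ^ (i : ℕ)))).card
      = (univ.filter (fun i : Fin n => Q (b * π ^ (i : ℕ) + a * (-π) ^ (i : ℕ)))).card := by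
  set h := n / 2 with hhdef
  have hh2 : 2 * h = n := Nat.mul_div_cancel' hn2
  have hmodpow : ∀ x : ℕ, π ^ (x % n) = π ^ x := by
    intro x
    have := pow_mod_orderOf π x
    rwa [hπ] at this
  have hπh : π ^ h = -1 := by
    have hsq : (π ^ h) ^ 2 = 1 := by
      rw [← pow_mul]
      have hhn : h * 2 = n := by omega
      rw [hhn, ← hπ, pow_orderOf_eq_one]
    have hne1 : π ^ h ≠ 1 := by
      intro hcon
      have hdvd := orderOf_dvd_of_pow_eq_one hcon
      rw [hπ] at hdvd
      have hh0 : 0 < h := by omega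
      have := Nat.le_of_dvd hh0 hdvd
      omega
    have hfac : (π ^ h - 1) * (π ^ h + 1) = 0 := by linear_combination hsq
    rcases mul_eq_zero.mp hfac with hc | hc
    · exact absurd (sub_eq_zero.mp hc) hne1
    · exact eq_neg_of_add_eq_zero_left hc
  have parfun : ∀ x : ℕ, (t * x + h * (x % 2)) % 2 = x % 2 := by
    intro x
    have h1 : t * x % 2 = 0 := by rw [Nat.mul_mod, hteven, zero_mul, Nat.zero_mod]
    have h2 : h * (x % 2) % 2 = x % 2 := by
      rw [Nat.mul_mod, hhodd, one_mul, Nat.mod_mod_of_dvd _ (dvd_refl 2),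
        Nat.mod_mod_of_dvd _ (dvd_refl 2)]
    have h3 := Nat.add_mod (t * x) (h * (x % 2)) 2
    omega
  apply filter_card_eq_of_comp (fun i => ⟨(t * (i : ℕ) + h * ((i : ℕ) % 2)) % n, Nat.mod_lt _ hn0⟩)
  · intro i j hij
    have h1 : t * (i : ℕ) + h * ((i : ℕ) % 2) ≡ t * (j : ℕ) + h * ((j : ℕ) % 2) [MOD n] :=
      congrArg Fin.val hij
    have hpar : (i : ℕ) % 2 = (j : ℕ) % 2 := by
      have hp2 : (t * (i : ℕ) + h * ((i : ℕ) % 2)) % 2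
          = (t * (j : ℕ) + h * ((j : ℕ) % 2)) % 2 := by
        rw [← Nat.mod_mod_of_dvd _ hn2, h1, Nat.mod_mod_of_dvd _ hn2]
      rwa [parfun, parfun] at hp2
    rw [hpar] at h1
    have h5 : t * (i : ℕ) ≡ t * (j : ℕ) [MOD n] := Nat.ModEq.add_right_cancel' _ h1
    have h6 := Nat.ModEq.cancel_left_div_gcd hn0 h5
    rw [hgcd] at h6
    have h7 : (i : ℕ) ≡ (j : ℕ) [MOD 2] := hpar
    have hcop2h : Nat.Coprime 2 h := by
      rw [Nat.Prime.coprime_iff_not_dvd Nat.prime_two]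
      omega
    have h8 := (Nat.modEq_and_modEq_iff_modEq_mul hcop2h).mp ⟨h7, h6⟩
    rw [hh2] at h8
    have h9 : (i : ℕ) % n = (j : ℕ) % n := h8
    rw [Nat.mod_eq_of_lt i.isLt, Nat.mod_eq_of_lt j.isLt] at h9
    exact Fin.ext h9
  · intro i
    set v := (i : ℕ) with hv
    show a * π ^ (t * v) + b * (-(π ^ t)) ^ v
        = b * π ^ ((t * v + h * (v % 2)) % n) + a * (-π) ^ ((t * v + h * (v % 2)) % n)
    have hparj : ((t * v + h * (v % 2)) % n) % 2 = v % 2 := by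
      rw [Nat.mod_mod_of_dvd _ hn2, parfun]
    have E1 : (-(π ^ t)) ^ v = (-1 : F) ^ (v % 2) * π ^ (t * v) := by
      rw [neg_pow, neg_one_pow_mod_two, ← pow_mul]
    have E3 : π ^ ((t * v + h * (v % 2)) % n) = π ^ (t * v) * (-1 : F) ^ (v % 2) := by
      rw [hmodpow, pow_add, pow_mul π h, hπh]
    have E2 : (-π) ^ ((t * v + h * (v % 2)) % n)
        = (-1 : F) ^ (v % 2) * (π ^ (t * v) * (-1 : F) ^ (v % 2)) := by
      rw [neg_pow, neg_one_pow_mod_two, hparj, E3]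
    rw [E1, E2, E3]
    rcases Nat.mod_two_eq_zero_or_one v with h0 | h0 <;> rw [h0] <;> ring


private lemma gcd_pow_dvd_two (p k m : ℕ) (hp : 2 ≤ p) (hk : 0 < k) (hm : 0 < m)
    (hv : padicValNat 2 m ≤ padicValNat 2 k) :
    Nat.gcd (p ^ k + 1) (p ^ m - 1) ∣ 2 := by
  set d := Nat.gcd (p ^ k + 1) (p ^ m - 1) with hd
  have hd1 : d ∣ p ^ k + 1 := Nat.gcd_dvd_left _ _
  have hd2 : d ∣ p ^ m - 1 := Nat.gcd_dvd_right _ _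
  have hpk1 : 1 ≤ p ^ k := Nat.one_le_pow _ _ (by omega)
  have hpm1 : 1 ≤ p ^ m := Nat.one_le_pow _ _ (by omega)
  -- g := gcd (2k) m divides k
  set g := Nat.gcd (2 * k) m with hg
  have hg0 : 0 < g := Nat.gcd_pos_of_pos_right _ hm
  have hgm : g ∣ m := Nat.gcd_dvd_right _ _
  have hg2k : g ∣ 2 * k := Nat.gcd_dvd_left _ _
  have hgk : g ∣ k := by
    rw [← Nat.factorization_le_iff_dvd hg0.ne' hk.ne']
    have h1 := (Nat.factorization_le_iff_dvd hg0.ne' (by omega : 2 * k ≠ 0)).mpr hg2k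
    have h2 := (Nat.factorization_le_iff_dvd hg0.ne' hm.ne').mpr hgm
    rw [Finsupp.le_def] at h1 h2 ⊢
    intro q
    rcases eq_or_ne q 2 with rfl | hq
    · have := h2 2
      rw [Nat.factorization_def _ Nat.prime_two, Nat.factorization_def _ Nat.prime_two] at this ⊢
      omega
    · have := h1 q
      rw [Nat.factorization_mul (by norm_num) hk.ne', Nat.Prime.factorization Nat.prime_two] at this
      simpa [Finsupp.single_apply, hq.symm] using this
  -- d divides p^(2k) - 1
  have hdvd2k : d ∣ p ^ (2 * k) - 1 := by
    have heq : p ^ (2 * k) - 1 = (p ^ k + 1) * (p ^ k - 1) := by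
      rw [mul_comm 2 k, pow_mul]
      simpa using Nat.sq_sub_sq (p ^ k) 1
    rw [heq]
    exact hd1.mul_right _
  -- p is coprime to d
  have hpd : Nat.Coprime p d := by
    have hcop : Nat.Coprime p (p ^ m - 1) := by
      have hA : Nat.gcd p (p ^ m - 1) ∣ p ^ m :=
        (Nat.gcd_dvd_left _ _).trans (dvd_pow_self p hm.ne')
      have hB : Nat.gcd p (p ^ m - 1) ∣ p ^ m - 1 := Nat.gcd_dvd_right _ _
      have hAB := Nat.dvd_sub hA hB
      have : p ^ m - (p ^ m - 1) = 1 := by omega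
      rw [this] at hAB
      exact Nat.dvd_one.mp hAB
    exact hcop.coprime_dvd_right hd2
  -- turn divisibility into identities in ZMod d
  have hcast : ∀ j : ℕ, d ∣ p ^ j - 1 → (p : ZMod d) ^ j = 1 := by
    intro j hj
    have h1j : 1 ≤ p ^ j := Nat.one_le_pow _ _ (by omega)
    have hmod : 1 ≡ p ^ j [MOD d] := (Nat.modEq_iff_dvd' h1j).mpr hj
    calc (p : ZMod d) ^ j = ((p ^ j : ℕ) : ZMod d) := by push_cast; ring
      _ = ((1 : ℕ) : ZMod d) := by
          rw [ZMod.natCast_eq_natCast_iff]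
          exact hmod.symm
      _ = 1 := Nat.cast_one
  set u := ZMod.unitOfCoprime p hpd with hu
  have hval : ∀ j : ℕ, d ∣ p ^ j - 1 → u ^ j = 1 := by
    intro j hj
    apply Units.ext
    rw [Units.val_pow_eq_pow_val, ZMod.coe_unitOfCoprime, hcast j hj, Units.val_one]
  have hord : orderOf u ∣ g := Nat.dvd_gcd
    (orderOf_dvd_of_pow_eq_one (hval _ hdvd2k))
    (orderOf_dvd_of_pow_eq_one (hval _ hd2))
  have hug : u ^ g = 1 := orderOf_dvd_iff_pow_eq_one.mp hord
  have hdg : d ∣ p ^ g - 1 := by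
    have h1 : (p : ZMod d) ^ g = 1 := by
      have := congrArg Units.val hug
      rwa [Units.val_pow_eq_pow_val, ZMod.coe_unitOfCoprime, Units.val_one] at this
    have h2 : ((p ^ g : ℕ) : ZMod d) = ((1 : ℕ) : ZMod d) := by push_cast [h1]; ring
    have h3 : 1 ≡ p ^ g [MOD d] := (ZMod.natCast_eq_natCast_iff _ _ _).mp h2.symm
    exact (Nat.modEq_iff_dvd' (Nat.one_le_pow _ _ (by omega))).mp h3
  have hdk : d ∣ p ^ k - 1 := by
    obtain ⟨c, hc⟩ := hgk
    have := Nat.sub_dvd_pow_sub_pow (p ^ g) 1 c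
    rw [one_pow, ← pow_mul, ← hc] at this
    exact hdg.trans this
  have hfin := Nat.dvd_sub hd1 hdk
  have : p ^ k + 1 - (p ^ k - 1) = 2 := by omega
  rwa [this] at hfin


theorem C1_Ct_same_weight_distribution (p m k : ℕ) [Fact p.Prime] (hodd : Odd p)
    (hm : 0 < m) (hk : 0 < k)
    (F : Type) [Field F] [Fintype F] [Algebra (ZMod p) F]
    (hcard : Fintype.card F = p ^ m)
    (π : F) (hπ : orderOf π = p ^ m - 1)
    (hv : padicValNat 2 m ≤ padicValNat 2 k)
    (t : ℕ) (ht : t = (p ^ k + 1) / 2) :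
    ∀ w : ℕ,
      (Finset.univ.filter (fun ab : F × F =>
        (Finset.univ.filter (fun i : Fin (p ^ m - 1) =>
          Algebra.trace (ZMod p) F
            (ab.1 * π ^ (1 * (i : ℕ)) + ab.2 * (-(π ^ 1)) ^ (i : ℕ)) ≠ 0)).card = w)).card
      =
      (Finset.univ.filter (fun ab : F × F =>
        (Finset.univ.filter (fun i : Fin (p ^ m - 1) =>
          Algebra.trace (ZMod p) F
            (ab.1 * π ^ (t * (i : ℕ)) + ab.2 * (-(π ^ t)) ^ (i : ℕ)) ≠ 0)).card = w)).card := by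
  intro w
  have hp2 : 2 ≤ p := (Fact.out : p.Prime).two_le
  have hp3 : 3 ≤ p := by
    obtain ⟨r, hr⟩ := hodd
    omega
  have hpm3 : 3 ≤ p ^ m := le_trans hp3 (Nat.le_self_pow hm.ne' p)
  have hpk3 : 3 ≤ p ^ k := le_trans hp3 (Nat.le_self_pow hk.ne' p)
  have hn0 : 0 < p ^ m - 1 := by omega
  have hpm_odd : Odd (p ^ m) := hodd.pow
  have hpk_odd : Odd (p ^ k) := hodd.pow
  have hn2 : 2 ∣ p ^ m - 1 := by
    obtain ⟨r, hr⟩ := hpm_odd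
    exact ⟨r, by omega⟩
  have h2t : 2 * t = p ^ k + 1 := by
    obtain ⟨r, hr⟩ := hpk_odd
    omega
  have hgcd2 : Nat.gcd (2 * t) (p ^ m - 1) ∣ 2 := by
    rw [h2t]
    exact gcd_pow_dvd_two p k m hp2 hk hm hv
  have hgnt : Nat.gcd (p ^ m - 1) t ∣ 2 := by
    refine dvd_trans ?_ hgcd2
    exact Nat.dvd_gcd ((Nat.gcd_dvd_right _ _).trans (dvd_mul_left t 2)) (Nat.gcd_dvd_left _ _)
  simp only [pow_one, one_mul]
  rcases Nat.mod_two_eq_zero_or_one t with ht2 | ht2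
  · -- t even : weights of c_t(a,b) match weights of c_1(b,a)
    have h2dt : (2 : ℕ) ∣ t := by omega
    have hgcdnt : Nat.gcd (p ^ m - 1) t = 2 :=
      Nat.dvd_antisymm hgnt (Nat.dvd_gcd hn2 h2dt)
    have h4 : ¬ (4 : ℕ) ∣ p ^ m - 1 := by
      intro h4
      have h42t : (4 : ℕ) ∣ 2 * t := by omega
      have := (Nat.dvd_gcd h42t h4).trans hgcd2
      omega
    have hhodd : ((p ^ m - 1) / 2) % 2 = 1 := by
      obtain ⟨n', hn'⟩ := hn2
      omega
    have key : ∀ a b : F,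
        (Finset.univ.filter (fun i : Fin (p ^ m - 1) =>
          Algebra.trace (ZMod p) F (a * π ^ (t * (i : ℕ)) + b * (-(π ^ t)) ^ (i : ℕ)) ≠ 0)).card
        = (Finset.univ.filter (fun i : Fin (p ^ m - 1) =>
          Algebra.trace (ZMod p) F (b * π ^ (i : ℕ) + a * (-π) ^ (i : ℕ)) ≠ 0)).card :=
      fun a b => inner_card_even hn0 hn2 π hπ t ht2 hhodd hgcdnt
        (fun x => Algebra.trace (ZMod p) F x ≠ 0) a b
    have h1 : (Finset.univ.filter (fun ab : F × F =>
        (Finset.univ.filter (fun i : Fin (p ^ m - 1) =>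
          Algebra.trace (ZMod p) F
            (ab.1 * π ^ (t * (i : ℕ)) + ab.2 * (-(π ^ t)) ^ (i : ℕ)) ≠ 0)).card = w))
        = (Finset.univ.filter (fun ab : F × F =>
        (Finset.univ.filter (fun i : Fin (p ^ m - 1) =>
          Algebra.trace (ZMod p) F
            (ab.2 * π ^ (i : ℕ) + ab.1 * (-π) ^ (i : ℕ)) ≠ 0)).card = w)) :=
      Finset.filter_congr (fun ab _ => by rw [key ab.1 ab.2])
    rw [h1]
    apply Finset.card_equiv (Equiv.prodComm F F)
    intro ab
    simp [Finset.mem_filter]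
  · -- t odd : weights of c_t(a,b) match weights of c_1(a,b)
    have hgcdnt : Nat.gcd (p ^ m - 1) t = 1 := by
      have h2g : ¬ (2 : ℕ) ∣ Nat.gcd (p ^ m - 1) t := by
        intro hcon
        have := hcon.trans (Nat.gcd_dvd_right (p ^ m - 1) t)
        omega
      rcases (Nat.dvd_prime Nat.prime_two).mp hgnt with h | h
      · exact h
      · exact absurd (h ▸ dvd_refl (Nat.gcd (p ^ m - 1) t)) h2g
    have key : ∀ a b : F,
        (Finset.univ.filter (fun i : Fin (p ^ m - 1) =>
          Algebra.trace (ZMod p) F (a * π ^ (t * (i : ℕ)) + b * (-(π ^ t)) ^ (i : ℕ)) ≠ 0)).card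
        = (Finset.univ.filter (fun i : Fin (p ^ m - 1) =>
          Algebra.trace (ZMod p) F (a * π ^ (i : ℕ) + b * (-π) ^ (i : ℕ)) ≠ 0)).card :=
      fun a b => inner_card_odd hn0 hn2 π hπ t ht2 hgcdnt
        (fun x => Algebra.trace (ZMod p) F x ≠ 0) a b
    congr 1
    exact Finset.filter_congr (fun ab _ => by rw [key ab.1 ab.2])
end

section
/- Set t = (p^k+1)/2 and suppose π^{t·p^i} ≠ −π^t for all i ∈ {0,1,…,m−1}. Then the map (a,b) ↦ c_t(a,b) from F_{p^m} × F_{p^m} to F_p^{p^m−1} is injective; in particular the cyclic code C_t contains exactly p^{2m} codewords, i.e., it has dimension 2m over F_p. -/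
open Finset

lemma dvd_pow_gcd_sub_one (p n a b : ℕ) (hp : 1 < p) (ha : 0 < a)
    (H1 : n ∣ p ^ a - 1) (H2 : n ∣ p ^ b - 1) : n ∣ p ^ Nat.gcd a b - 1 := by
  have hpa1 : 1 ≤ p ^ a := Nat.one_le_pow _ _ (by omega)
  have hpa : 1 < p ^ a := Nat.one_lt_pow (by omega) hp
  have hn0 : 0 < n := by
    rcases Nat.eq_zero_or_pos n with h | h
    · subst h; have := Nat.eq_zero_of_zero_dvd H1; omega
    · exact h
  haveI : NeZero n := ⟨by omega⟩
  -- coprimality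
  have hcop : Nat.Coprime p n := by
    have hg1 : Nat.gcd p n ∣ p ^ a - 1 := dvd_trans (Nat.gcd_dvd_right p n) H1
    have hg2 : Nat.gcd p n ∣ p ^ a := dvd_pow (Nat.gcd_dvd_left p n) (by omega)
    have : Nat.gcd p n ∣ p ^ a - (p ^ a - 1) := Nat.dvd_sub hg2 hg1
    rw [show p ^ a - (p ^ a - 1) = 1 by omega] at this
    exact Nat.eq_one_of_dvd_one this
  have key : ∀ e : ℕ, n ∣ p ^ e - 1 ↔ (p : ZMod n) ^ e = 1 := by
    intro e
    have h1e : 1 ≤ p ^ e := Nat.one_le_pow _ _ (by omega)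
    constructor
    · intro h
      have : ((p ^ e - 1 : ℕ) : ZMod n) = 0 := (ZMod.natCast_eq_zero_iff _ _).mpr h
      rw [Nat.cast_sub h1e] at this
      push_cast at this ⊢
      linear_combination this
    · intro h
      have : ((p ^ e - 1 : ℕ) : ZMod n) = 0 := by
        rw [Nat.cast_sub h1e]; push_cast; linear_combination h
      exact (ZMod.natCast_eq_zero_iff _ _).mp this
  set u := ZMod.unitOfCoprime p hcop with hu
  have hval : ((u : ZMod n)) = (p : ZMod n) := rfl
  have hkeyu : ∀ e : ℕ, n ∣ p ^ e - 1 ↔ u ^ e = 1 := by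
    intro e
    rw [key e, ← hval, Units.ext_iff, Units.val_pow_eq_pow_val, Units.val_one]
  have h1 : orderOf u ∣ a := orderOf_dvd_of_pow_eq_one ((hkeyu a).mp H1)
  have h2 : orderOf u ∣ b := orderOf_dvd_of_pow_eq_one ((hkeyu b).mp H2)
  have h3 : orderOf u ∣ Nat.gcd a b := Nat.dvd_gcd h1 h2
  exact (hkeyu _).mpr (orderOf_dvd_iff_pow_eq_one.mp h3)

lemma parity_contra (p h u₀ : ℕ) (hp : 1 < p) (hpodd : Odd p) (hu : Odd u₀)
    (H : 2 * (p ^ h + 1) ∣ p ^ (h * u₀) + 1) : False := by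
  set x : ℤ := (p : ℤ) ^ h with hx
  have hx1 : (1 : ℤ) ≤ x := one_le_pow₀ (by exact_mod_cast hp.le)
  set w : ℤ := ∑ j ∈ Finset.range u₀, (-x) ^ j with hw
  have hgeom : (x + 1) * w = x ^ u₀ + 1 := by
    have := geom_sum_mul (-x) u₀
    rw [hu.neg_pow] at this
    linear_combination -this
  have hwodd : ¬ (2 : ℤ) ∣ w := by
    rw [show (2:ℤ) = ((2:ℕ):ℤ) by norm_num, ← ZMod.intCast_zmod_eq_zero_iff_dvd]
    have hp1' : (p : ZMod 2) = 1 := by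
      rw [← ZMod.natCast_mod, Nat.odd_iff.mp hpodd, Nat.cast_one]
    have : ((w : ℤ) : ZMod 2) = 1 := by
      rw [hw]
      push_cast
      have hxc : ((x : ℤ) : ZMod 2) = 1 := by
        rw [hx]; push_cast; rw [hp1', one_pow]
      rw [hxc, neg_one_geom_sum, if_neg (by simpa using hu)]
    rw [this]; exact one_ne_zero
  -- cast H to ℤ
  have HZ : (2 * (x + 1)) ∣ (x ^ u₀ + 1) := by
    rw [hx, ← pow_mul]
    exact_mod_cast Int.natCast_dvd_natCast.mpr H
  obtain ⟨z, hz⟩ := HZ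
  rw [← hgeom] at hz
  have hxne : x + 1 ≠ 0 := by omega
  have : w = 2 * z := by
    have h2 : (x + 1) * w = (x + 1) * (2 * z) := by linear_combination hz
    exact mul_left_cancel₀ hxne h2
  exact hwodd ⟨z, this⟩

lemma NT (p k m d : ℕ) (hp : p.Prime) (hodd : Odd p) (hk : 0 < k) (hd : 0 < d)
    (hdm : d ∣ m) (hlt : d < m)
    (H : (p ^ m - 1) ∣ ((p ^ k + 1) / 2) * (p ^ d - 1)) : False := by
  have hp2 : 2 ≤ p := hp.two_le
  have hp3 : 3 ≤ p := by
    have : p ≠ 2 := by rintro rfl; exact (by norm_num : ¬ Odd 2) hodd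
    omega
  have hp1 : 1 < p := by omega
  have hm : 0 < m := by omega
  have hq1 : 1 < p ^ d := Nat.one_lt_pow (by omega) hp1
  have hQ1 : 1 < p ^ m := Nat.one_lt_pow (by omega) hp1
  have hpk1 : 1 ≤ p ^ k := Nat.one_le_pow _ _ (by omega)
  -- 2 * t = p^k + 1
  have hpkodd : Odd (p ^ k) := hodd.pow
  have h2t : 2 * ((p ^ k + 1) / 2) = p ^ k + 1 := by
    obtain ⟨j, hj⟩ := hpkodd; omega
  -- S
  have hdvd' : p ^ d - 1 ∣ p ^ m - 1 := by
    obtain ⟨s, rfl⟩ := hdm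
    have := Nat.sub_dvd_pow_sub_pow (p ^ d) 1 s
    simpa [← pow_mul] using this
  set S := (p ^ m - 1) / (p ^ d - 1) with hSdef
  have hS : S * (p ^ d - 1) = p ^ m - 1 := Nat.div_mul_cancel hdvd'
  have h2S : 2 * S ∣ p ^ k + 1 := by
    have h1 : (2 * S) * (p ^ d - 1) ∣ (p ^ k + 1) * (p ^ d - 1) := by
      have : 2 * (p ^ m - 1) ∣ 2 * (((p ^ k + 1) / 2) * (p ^ d - 1)) :=
        Nat.mul_dvd_mul_left 2 H
      calc (2 * S) * (p ^ d - 1) = 2 * (p ^ m - 1) := by rw [mul_assoc, hS]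
        _ ∣ 2 * (((p ^ k + 1) / 2) * (p ^ d - 1)) := this
        _ = (p ^ k + 1) * (p ^ d - 1) := by rw [← mul_assoc, h2t]
    exact (Nat.mul_dvd_mul_iff_right (by omega : 0 < p ^ d - 1)).mp h1
  have hSk : S ∣ p ^ k + 1 := dvd_trans (dvd_mul_left S 2) h2S
  have hSm : S ∣ p ^ m - 1 := Dvd.intro _ hS
  have hS2k : S ∣ p ^ (2 * k) - 1 := by
    have hfac : p ^ (2 * k) - 1 = (p ^ k + 1) * (p ^ k - 1) := by
      have h1 : p ^ (2 * k) = p ^ k * p ^ k := by rw [two_mul, pow_add]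
      zify [hpk1, show 1 ≤ p ^ (2*k) from Nat.one_le_pow _ _ (by omega)]
      rw [show ((p:ℤ))^(2*k) = (p:ℤ)^k * (p:ℤ)^k by rw [two_mul, pow_add]]
      ring
    rw [hfac]
    exact Dvd.dvd.mul_right hSk _
  -- lower bound on S
  have hmd : p ^ (m - d) * p ^ d = p ^ m := by rw [← pow_add]; congr 1; omega
  have hmd1 : 1 < p ^ (m - d) := Nat.one_lt_pow (by omega) hp1
  have hSlb : p ^ (m - d) < S := by
    by_contra hcon
    push_neg at hcon
    have : S * (p ^ d - 1) ≤ p ^ (m - d) * (p ^ d - 1) :=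
      Nat.mul_le_mul_right _ hcon
    rw [hS, Nat.mul_sub_one] at this
    omega
  -- g = gcd(2k, m), S ∣ p^g - 1
  have hg : S ∣ p ^ Nat.gcd (2 * k) m - 1 :=
    dvd_pow_gcd_sub_one p S (2 * k) m hp1 (by omega) hS2k hSm
  have hgm : Nat.gcd (2 * k) m ∣ m := Nat.gcd_dvd_right _ _
  have hSle : S ≤ p ^ Nat.gcd (2 * k) m - 1 := by
    refine Nat.le_of_dvd ?_ hg
    have h0 : 0 < Nat.gcd (2 * k) m := Nat.gcd_pos_of_pos_right _ hm
    have := Nat.one_lt_pow (by omega : Nat.gcd (2*k) m ≠ 0) hp1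
    omega
  have hgma : m - d < Nat.gcd (2 * k) m := by
    have h1 : p ^ (m - d) < p ^ Nat.gcd (2 * k) m := by omega
    exact (Nat.pow_lt_pow_iff_right hp1).mp h1
  have hd2 : 2 * d ≤ m := by
    obtain ⟨s, hs⟩ := hdm
    have hs2 : 2 ≤ s := by
      rcases Nat.lt_or_ge s 2 with h | h
      · interval_cases s <;> omega
      · exact h
    have : d * 2 ≤ d * s := Nat.mul_le_mul_left d hs2
    omega
  have hm2k : m ∣ 2 * k := by
    obtain ⟨r, hr⟩ := hgm
    have hr2 : r = 1 := by
      rcases Nat.lt_or_ge r 2 with h | h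
      · interval_cases r <;> omega
      · exfalso
        have : Nat.gcd (2*k) m * 2 ≤ Nat.gcd (2*k) m * r := Nat.mul_le_mul_left _ h
        omega
    rw [hr2, mul_one] at hr
    exact hr ▸ Nat.gcd_dvd_left _ _
  have hple : p ≤ p ^ (m - d) := Nat.le_self_pow (by omega) p
  by_cases hmk : m ∣ k
  · obtain ⟨v, hv⟩ := hmk
    have hdk : p ^ m - 1 ∣ p ^ k - 1 := by
      have := Nat.sub_dvd_pow_sub_pow (p ^ m) 1 v
      simpa [← pow_mul, ← hv] using this
    have hSk1 : S ∣ p ^ k - 1 := hSm.trans hdk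
    have hS2' : S ∣ 2 := by
      have := Nat.dvd_sub hSk hSk1
      rwa [show (p ^ k + 1) - (p ^ k - 1) = 2 by omega] at this
    have : S ≤ 2 := Nat.le_of_dvd (by norm_num) hS2'
    omega
  · have hmeven : 2 ∣ m := by
      by_contra hodd'
      have hc : Nat.Coprime m 2 :=
        ((Nat.prime_two.coprime_iff_not_dvd).mpr hodd').symm
      exact hmk (hc.dvd_of_dvd_mul_right (by rwa [mul_comm] at hm2k))
    obtain ⟨h, hm2⟩ := hmeven
    have hh0 : 0 < h := by omega
    have hhk : h ∣ k := by
      obtain ⟨w, hw⟩ := hm2k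
      rw [hm2, mul_assoc] at hw
      exact ⟨w, by omega⟩
    obtain ⟨u₀, hku⟩ := hhk
    have hu₀odd : Odd u₀ := by
      rcases Nat.even_or_odd u₀ with he | ho
      · obtain ⟨v, hv⟩ := he
        exact absurd ⟨v, by rw [hku, hm2, hv]; ring⟩ hmk
      · exact ho
    have hdh : d ≤ h := by omega
    have hph1 : 1 ≤ p ^ h := Nat.one_le_pow _ _ (by omega)
    have hfac2 : (p ^ h - 1) * (p ^ h + 1) = p ^ m - 1 := by
      zify [hph1, show 1 ≤ p ^ m by omega]
      rw [hm2, two_mul, pow_add]; ring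
    have hpdh : p ^ d ≤ p ^ h := Nat.pow_le_pow_right (by omega) hdh
    have hphS : p ^ h + 1 ≤ S := by
      refine Nat.le_of_mul_le_mul_right ?_ (show 0 < p ^ d - 1 by omega)
      calc (p ^ h + 1) * (p ^ d - 1) ≤ (p ^ h + 1) * (p ^ h - 1) :=
            Nat.mul_le_mul_left _ (by omega)
        _ = p ^ m - 1 := by rw [mul_comm]; exact hfac2
        _ = S * (p ^ d - 1) := hS.symm
    have hph1k : p ^ h - 1 ∣ p ^ k - 1 := by
      have := Nat.sub_dvd_pow_sub_pow (p ^ h) 1 u₀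
      simpa [← pow_mul, ← hku] using this
    have hgcd2 : Nat.gcd S (p ^ h - 1) ∣ 2 := by
      have g1 : Nat.gcd S (p ^ h - 1) ∣ p ^ k + 1 := (Nat.gcd_dvd_left _ _).trans hSk
      have g2 : Nat.gcd S (p ^ h - 1) ∣ p ^ k - 1 := (Nat.gcd_dvd_right _ _).trans hph1k
      have := Nat.dvd_sub g1 g2
      rwa [show (p ^ k + 1) - (p ^ k - 1) = 2 by omega] at this
    have hS2ph : S ∣ 2 * (p ^ h + 1) := by
      have h1 : S ∣ Nat.gcd S (p ^ h - 1) * (p ^ h + 1) := by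
        rw [← Nat.gcd_mul_right]
        exact Nat.dvd_gcd (Dvd.intro _ rfl) (hfac2 ▸ hSm)
      exact h1.trans (Nat.mul_dvd_mul_right hgcd2 _)
    obtain ⟨c', hc'⟩ := hS2ph
    have hS0 : 0 < S := by omega
    have hc'le : c' ≤ 2 := by
      by_contra hc3
      push_neg at hc3
      have : S * 3 ≤ S * c' := Nat.mul_le_mul_left _ (by omega)
      omega
    have hfinal : 2 * (p ^ h + 1) ∣ p ^ k + 1 := by
      interval_cases c'
      · omega
      · rw [mul_one] at hc'
        exact hc' ▸ hSk
      · have : S = p ^ h + 1 := by omega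
        exact (by rw [← this] : 2 * (p^h+1) = 2 * S) ▸ h2S
    exact parity_contra p h u₀ hp1 hodd hu₀odd (hku ▸ hfinal)

theorem codeword_map_injective (p m k : ℕ) [Fact p.Prime] (hodd : Odd p)
    (hm : 0 < m) (hk : 0 < k)
    (F : Type) [Field F] [Fintype F] [DecidableEq F] [Algebra (ZMod p) F]
    (hcard : Fintype.card F = p ^ m)
    (π : F) (hπ : orderOf π = p ^ m - 1)
    (t : ℕ) (ht : t = (p ^ k + 1) / 2)
    (hne : ∀ i < m, π ^ (t * p ^ i) ≠ -(π ^ t)) :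
    Function.Injective (fun ab : F × F => fun i : Fin (p ^ m - 1) =>
      Algebra.trace (ZMod p) F
        (ab.1 * π ^ (t * (i : ℕ)) + ab.2 * (-(π ^ t)) ^ (i : ℕ))) ∧
    (Finset.univ.image (fun ab : F × F => fun i : Fin (p ^ m - 1) =>
      Algebra.trace (ZMod p) F
        (ab.1 * π ^ (t * (i : ℕ)) + ab.2 * (-(π ^ t)) ^ (i : ℕ)))).card = p ^ (2 * m) := by
  have hp : p.Prime := Fact.out
  have hp2 : 2 ≤ p := hp.two_le
  have hp3 : 3 ≤ p := by
    have : p ≠ 2 := by rintro rfl; exact (by norm_num : ¬ Odd 2) hodd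
    omega
  have hp1 : 1 < p := by omega
  have hQ1 : 1 < p ^ m := Nat.one_lt_pow (by omega) hp1
  set N := p ^ m - 1 with hNdef
  have hN0 : 0 < N := by omega
  have hNeven : N % 2 = 0 := by
    obtain ⟨j, hj⟩ := (hodd.pow : Odd (p ^ m))
    omega
  have hπN : π ^ N = 1 := by rw [← hπ]; exact pow_orderOf_eq_one π
  have hπ0 : π ≠ 0 := by
    intro h0
    rw [h0, zero_pow (by omega : N ≠ 0)] at hπN
    exact zero_ne_one hπN
  set α := π ^ t with hα
  have hα0 : α ≠ 0 := pow_ne_zero _ hπ0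
  have hchar : CharP F p := charP_of_injective_algebraMap (algebraMap (ZMod p) F).injective p
  have h2F : (2 : F) ≠ 0 := by
    intro h2
    have hpd : p ∣ 2 := (CharP.cast_eq_zero_iff F p 2).mp (by exact_mod_cast h2)
    have := Nat.le_of_dvd (by norm_num) hpd
    omega
  have hinj : Function.Injective (fun ab : F × F => fun i : Fin (p ^ m - 1) =>
      Algebra.trace (ZMod p) F
        (ab.1 * π ^ (t * (i : ℕ)) + ab.2 * (-(π ^ t)) ^ (i : ℕ))) := by
    intro x y hxy
    have hcomp : ∀ i : Fin N, Algebra.trace (ZMod p) F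
        (x.1 * π ^ (t * (i : ℕ)) + x.2 * (-(π ^ t)) ^ (i : ℕ)) =
        Algebra.trace (ZMod p) F
        (y.1 * π ^ (t * (i : ℕ)) + y.2 * (-(π ^ t)) ^ (i : ℕ)) := fun i => congrFun hxy i
    set c := x.1 - y.1 with hc
    set e := x.2 - y.2 with he
    have key0 : ∀ i : Fin N, Algebra.trace (ZMod p) F
        (c * π ^ (t * (i : ℕ)) + e * (-(π ^ t)) ^ (i : ℕ)) = 0 := by
      intro i
      have h1 := hcomp i
      have h2 : c * π ^ (t * (i : ℕ)) + e * (-(π ^ t)) ^ (i : ℕ) =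
          (x.1 * π ^ (t * (i : ℕ)) + x.2 * (-(π ^ t)) ^ (i : ℕ)) -
          (y.1 * π ^ (t * (i : ℕ)) + y.2 * (-(π ^ t)) ^ (i : ℕ)) := by
        rw [hc, he]; ring
      rw [h2, map_sub, h1, sub_self]
    have keyN : ∀ j : ℕ, Algebra.trace (ZMod p) F ((c + (-1 : F) ^ j * e) * α ^ j) = 0 := by
      intro j
      have hlt' : j % N < N := Nat.mod_lt _ hN0
      have h1 := key0 ⟨j % N, hlt'⟩
      have hmodeq : (t * (j % N)) % N = (t * j) % N := (Nat.mod_modEq j N).mul_left t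
      have e0 : π ^ (t * (j % N)) = π ^ (t * j) := by
        conv_lhs => rw [← pow_mod_orderOf]
        conv_rhs => rw [← pow_mod_orderOf]
        rw [hπ, hmodeq]
      have e1 : π ^ (t * ((⟨j % N, hlt'⟩ : Fin N) : ℕ)) = α ^ j := by
        show π ^ (t * (j % N)) = α ^ j
        rw [hα, ← pow_mul]
        exact e0
      have eα : α ^ (j % N) = α ^ j := by
        rw [hα, ← pow_mul, ← pow_mul]
        exact e0
      have eneg : ((-1 : F)) ^ (j % N) = (-1 : F) ^ j := by
        have hpar : (j % N) % 2 = j % 2 := by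
          have hsplit : N * (j / N) + j % N = j := Nat.div_add_mod j N
          obtain ⟨w, hwN⟩ : ∃ w, N = 2 * w := ⟨N / 2, by omega⟩
          have heven : N * (j / N) = 2 * (w * (j / N)) := by rw [hwN]; ring
          omega
        rcases Nat.even_or_odd j with hj | hj
        · have hj2 : j % 2 = 0 := Nat.even_iff.mp hj
          rw [(Nat.even_iff.mpr (by omega : (j % N) % 2 = 0)).neg_one_pow, hj.neg_one_pow]
        · have hj2 : j % 2 = 1 := Nat.odd_iff.mp hj
          rw [(Nat.odd_iff.mpr (by omega : (j % N) % 2 = 1)).neg_one_pow, hj.neg_one_pow]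
      have e2 : (-(π ^ t)) ^ ((⟨j % N, hlt'⟩ : Fin N) : ℕ) = (-1 : F) ^ j * α ^ j := by
        show (-(π ^ t)) ^ (j % N) = _
        rw [← hα, neg_pow, eneg, eα]
      rw [e1, e2] at h1
      have h3 : (c + (-1 : F) ^ j * e) * α ^ j = c * α ^ j + e * ((-1 : F) ^ j * α ^ j) := by
        ring
      rw [h3]
      exact h1
    have keyEven : ∀ j : ℕ, Algebra.trace (ZMod p) F ((c + e) * (α ^ 2) ^ j) = 0 := by
      intro j
      have h1 := keyN (2 * j)
      have h2 : ((-1 : F)) ^ (2 * j) = 1 := by rw [pow_mul]; norm_num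
      rw [h2, one_mul] at h1
      rw [show (c + e) * (α ^ 2) ^ j = (c + e) * α ^ (2 * j) by rw [← pow_mul]]
      exact h1
    have keyOdd : ∀ j : ℕ, Algebra.trace (ZMod p) F (α * ((α ^ 2) ^ j * (c - e))) = 0 := by
      intro j
      have h1 := keyN (2 * j + 1)
      have h2 : ((-1 : F)) ^ (2 * j + 1) = -1 := by
        rw [pow_succ, pow_mul]; norm_num
      rw [h2] at h1
      rw [show α * ((α ^ 2) ^ j * (c - e)) = (c + (-1) * e) * α ^ (2 * j + 1) by
        rw [← pow_mul, pow_succ]; ring]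
      exact h1
    -- the subalgebra generated by α^2 is everything
    set A := Algebra.adjoin (ZMod p) ({α ^ 2} : Set F) with hA
    have hmemspan : ∀ z, z ∈ A →
        z ∈ Submodule.span (ZMod p) ((Submonoid.powers (α ^ 2) : Submonoid F) : Set F) := by
      intro z hz
      have h1 : z ∈ Subalgebra.toSubmodule A := hz
      rw [hA, Algebra.adjoin_eq_span, ← Submonoid.powers_eq_closure] at h1
      exact h1
    letI : Fintype A := Fintype.ofFinite A
    letI : Field A := Fintype.fieldOfDomain A
    set d' := Module.finrank (ZMod p) A with hd'
    have hcardA : Fintype.card A = p ^ d' := by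
      rw [Module.card_eq_pow_finrank (K := ZMod p) (V := A), ZMod.card]
    have hd'pos : 0 < d' := by
      have h1 : 1 < Fintype.card A := Fintype.one_lt_card
      by_contra h0
      push_neg at h0
      interval_cases d'
      · simp at hcardA; omega
    have hfinrankF : Module.finrank (ZMod p) F = m := by
      have h1 := Module.card_eq_pow_finrank (K := ZMod p) (V := F)
      rw [ZMod.card, hcard] at h1
      exact (Nat.pow_right_injective hp2 h1.symm)
    have hd'le : d' ≤ m := by
      rw [hd', ← hfinrankF]
      exact Submodule.finrank_le (Subalgebra.toSubmodule A)
    have hα2A : α ^ 2 ∈ A := Algebra.subset_adjoin (Set.mem_singleton _)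
    have hfrob : (α ^ 2) ^ (p ^ d') = α ^ 2 := by
      have h1 := FiniteField.pow_card (⟨α ^ 2, hα2A⟩ : A)
      rw [hcardA] at h1
      have h2 := congrArg Subtype.val h1
      simpa using h2
    have hAtop : A = ⊤ := by
      rcases eq_or_lt_of_le hd'le with heq | hlt'
      · rw [← Algebra.toSubmodule_eq_top]
        apply Submodule.eq_top_of_finrank_eq
        rw [hfinrankF, ← heq]
        rfl
      · exfalso
        have hsq : α ^ (p ^ d') * α ^ (p ^ d') = α * α := by
          have h1 : (α ^ (p ^ d')) ^ 2 = α ^ 2 := by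
            rw [← pow_mul, mul_comm, pow_mul]
            exact hfrob
          calc α ^ (p ^ d') * α ^ (p ^ d') = (α ^ (p ^ d')) ^ 2 := (sq _).symm
            _ = α ^ 2 := h1
            _ = α * α := sq α
        rcases mul_self_eq_mul_self_iff.mp hsq with hcase | hcase
        · set g := Nat.gcd d' m with hgdef
          have hg0 : 0 < g := Nat.gcd_pos_of_pos_left _ hd'pos
          have hgm' : g ∣ m := Nat.gcd_dvd_right _ _
          have hgled : g ≤ d' := Nat.le_of_dvd hd'pos (Nat.gcd_dvd_left _ _)
          have hglt : g < m := lt_of_le_of_lt hgled hlt'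
          have hpd'1 : 1 ≤ p ^ d' := Nat.one_le_pow _ _ (by omega)
          have ho1 : α ^ (p ^ d' - 1) = 1 := by
            have h2 : α ^ (p ^ d' - 1) * α = 1 * α := by
              rw [one_mul, ← pow_succ, show p ^ d' - 1 + 1 = p ^ d' by omega]
              exact hcase
            exact mul_right_cancel₀ hα0 h2
          have ho2 : α ^ N = 1 := by
            rw [hα, ← pow_mul, mul_comm, pow_mul, hπN, one_pow]
          have hord : orderOf α ∣ p ^ g - 1 :=
            dvd_pow_gcd_sub_one p (orderOf α) d' m hp1 hd'pos
              (orderOf_dvd_of_pow_eq_one ho1)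
              (orderOf_dvd_of_pow_eq_one (by rw [hNdef] at ho2; exact ho2))
          have hππ : π ^ (t * (p ^ g - 1)) = 1 := by
            rw [pow_mul, ← hα]
            exact orderOf_dvd_iff_pow_eq_one.mp hord
          have hNdvd : N ∣ t * (p ^ g - 1) := by
            rw [← hπ]
            exact orderOf_dvd_of_pow_eq_one hππ
          refine NT p k m g hp hodd hk hg0 hgm' hglt ?_
          rw [← ht]
          exact hNdvd
        · refine hne d' hlt' ?_
          have h3 : π ^ (t * p ^ d') = α ^ (p ^ d') := by rw [pow_mul, ← hα]
          rw [h3, hcase, hα]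
    have hspanTop : ∀ b : F,
        b ∈ Submodule.span (ZMod p) ((Submonoid.powers (α ^ 2) : Submonoid F) : Set F) := by
      intro b
      exact hmemspan b (hAtop ▸ Algebra.mem_top)
    have hce : c + e = 0 := by
      have hall : ∀ b : F, Algebra.trace (ZMod p) F ((c + e) * b) = 0 := by
        intro b
        refine Submodule.span_induction
          (p := fun z _ => Algebra.trace (ZMod p) F ((c + e) * z) = 0)
          ?_ ?_ ?_ ?_ (hspanTop b)
        · intro z hz
          rw [SetLike.mem_coe, Submonoid.mem_powers_iff] at hz
          obtain ⟨n, rfl⟩ := hz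
          exact keyEven n
        · simp only [mul_zero, map_zero]
        · intro u v hu hv hpu hpv
          simp only [mul_add, map_add, hpu, hpv, add_zero]
        · intro r u hu hpu
          simp only [mul_smul_comm, map_smul, hpu, smul_zero]
      have hnd := (traceForm_nondegenerate (ZMod p) F).1 (c + e)
      simp_rw [Algebra.traceForm_apply] at hnd
      exact hnd hall
    have hcesub : c - e = 0 := by
      have hall : ∀ b : F, Algebra.trace (ZMod p) F ((c - e) * b) = 0 := by
        intro b
        have hres : Algebra.trace (ZMod p) F (α * ((α⁻¹ * b) * (c - e))) = 0 := by
          refine Submodule.span_induction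
            (p := fun z _ => Algebra.trace (ZMod p) F (α * (z * (c - e))) = 0)
            ?_ ?_ ?_ ?_ (hspanTop (α⁻¹ * b))
          · intro z hz
            rw [SetLike.mem_coe, Submonoid.mem_powers_iff] at hz
            obtain ⟨n, rfl⟩ := hz
            exact keyOdd n
          · simp only [zero_mul, mul_zero, map_zero]
          · intro u v hu hv hpu hpv
            simp only [add_mul, mul_add, map_add, hpu, hpv, add_zero]
          · intro r u hu hpu
            simp only [smul_mul_assoc, mul_smul_comm, map_smul, hpu, smul_zero]
        have hrw : α * ((α⁻¹ * b) * (c - e)) = (c - e) * b := by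
          field_simp
        rwa [hrw] at hres
      have hnd := (traceForm_nondegenerate (ZMod p) F).1 (c - e)
      simp_rw [Algebra.traceForm_apply] at hnd
      exact hnd hall
    have hc0 : c = 0 := by
      have h2c : 2 * c = 0 := by linear_combination hce + hcesub
      rcases mul_eq_zero.mp h2c with h | h
      · exact absurd h h2F
      · exact h
    have he0 : e = 0 := by linear_combination hce - hc0
    have h1 : x.1 = y.1 := by
      have : x.1 - y.1 = 0 := by rw [← hc]; exact hc0
      exact sub_eq_zero.mp this
    have h2 : x.2 = y.2 := by
      have : x.2 - y.2 = 0 := by rw [← he]; exact he0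
      exact sub_eq_zero.mp this
    exact Prod.ext h1 h2
  refine ⟨hinj, ?_⟩
  rw [Finset.card_image_of_injective _ hinj, Finset.card_univ, Fintype.card_prod,
    hcard, two_mul, pow_add]
end
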